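/- arXiv:2405.08615 — 4 statements merged into one kernel-verified Lean document; each statement's English description precedes it below -/
import Mathlib

section
/- Let x₁, x₂, x₃ be elements of a complex unital Banach algebra A satisfying x₁x₂ + x₁x₃ + x₂x₃ = α₁·1 + α₂(x₁ + x₂ + x₃) and x₁x₂x₃ = β(x₁ + x₂ + x₃), where α₁, α₂, β ∈ ℂ with β ≠ 0. If x₁, x₂ and x₁ + x₂ + x₃ are all generalized Drazin invertible, then x₃ is generalized Drazin invertible. -/
/-- `b` is a generalized Drazin inverse of `a`: `a` commutes with `b`, `b` is inner-inverse
to itself relative to `a`, and `a * (1 - a * b)` is quasinilpotent (spectral radius zero). -/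
def IsGDrazinInverse {A : Type*} [NormedRing A] [NormedAlgebra ℂ A] (a b : A) : Prop :=
  a * b = b * a ∧ b * a * b = b ∧ spectralRadius ℂ (a * (1 - a * b)) = 0

/-- `a` is generalized Drazin invertible. -/
def GDrazinInvertible {A : Type*} [NormedRing A] [NormedAlgebra ℂ A] (a : A) : Prop :=
  ∃ b : A, IsGDrazinInverse a b

set_option linter.unusedSectionVars false

open scoped Real ENNReal NNReal

noncomputable section ResolventBasics
variable {A : Type*} [NormedRing A] [NormedAlgebra ℂ A] [CompleteSpace A]

/-- The resolvent-like function `z ↦ (z•1 - a)⁻¹`. -/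
def Res (a : A) (z : ℂ) : A := Ring.inverse (z • (1 : A) - a)

variable {a : A} {z w : ℂ}

lemma Res_mul_cancel (h : IsUnit (z • (1 : A) - a)) : (z • (1 : A) - a) * Res a z = 1 :=
  Ring.mul_inverse_cancel _ h

lemma Res_cancel_mul (h : IsUnit (z • (1 : A) - a)) : Res a z * (z • (1 : A) - a) = 1 :=
  Ring.inverse_mul_cancel _ h

lemma a_mul_Res (h : IsUnit (z • (1 : A) - a)) : a * Res a z = z • Res a z - 1 := by
  have h1 := Res_mul_cancel h
  rw [sub_mul, smul_mul_assoc, one_mul] at h1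
  rw [← h1]; abel

lemma Res_mul_a (h : IsUnit (z • (1 : A) - a)) : Res a z * a = z • Res a z - 1 := by
  have h1 := Res_cancel_mul h
  rw [mul_sub, mul_smul_comm, mul_one] at h1
  rw [← h1]; abel

lemma Res_comm_a (h : IsUnit (z • (1 : A) - a)) : a * Res a z = Res a z * a := by
  rw [a_mul_Res h, Res_mul_a h]

lemma Res_continuousAt (h : IsUnit (z • (1 : A) - a)) : ContinuousAt (Res a) z := by
  have hg : Continuous fun w : ℂ => w • (1 : A) - a :=
    (continuous_id.smul continuous_const).sub continuous_const
  have := NormedRing.inverse_continuousAt h.unit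
  rw [h.unit_spec] at this
  have : ContinuousAt (fun w : ℂ => Ring.inverse (w • (1 : A) - a)) z :=
    ContinuousAt.comp (g := Ring.inverse) (f := fun w : ℂ => w • (1 : A) - a) this
      hg.continuousAt
  exact this

lemma Res_differentiableAt (h : IsUnit (z • (1 : A) - a)) :
    DifferentiableAt ℂ (Res a) z := by
  have hg : DifferentiableAt ℂ (fun w : ℂ => w • (1 : A) - a) z :=
    (differentiableAt_id.smul_const (1 : A)).sub_const a
  exact hg.inverse h

lemma Res_resolvent_identity (hz : IsUnit (z • (1 : A) - a)) (hw : IsUnit (w • (1 : A) - a))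
    (hzw : z ≠ w) : Res a z * Res a w = (z - w)⁻¹ • (Res a w - Res a z) := by
  have e : (z • (1 : A) - a) - (w • (1 : A) - a) = (z - w) • (1 : A) := by
    rw [sub_smul]; abel
  have key : (z - w) • (Res a z * Res a w) = Res a w - Res a z := by
    have : Res a z * (((z • (1 : A) - a) - (w • (1 : A) - a)) * Res a w)
        = Res a z * (((z - w) • (1 : A)) * Res a w) := by rw [e]
    rw [sub_mul, mul_sub, ← mul_assoc, Res_cancel_mul hz, one_mul, ← mul_assoc,
      smul_mul_assoc, one_mul, mul_smul_comm] at this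
    rw [← this]
    congr 1
    rw [mul_assoc, Res_mul_cancel hw, mul_one]
  have hne : z - w ≠ 0 := sub_ne_zero.mpr hzw
  rw [← key, smul_smul, inv_mul_cancel₀ hne, one_smul]

lemma Res_comm_Res (hz : IsUnit (z • (1 : A) - a)) (hw : IsUnit (w • (1 : A) - a)) :
    Res a z * Res a w = Res a w * Res a z := by
  rcases eq_or_ne z w with rfl | hzw
  · rfl
  · rw [Res_resolvent_identity hz hw hzw, Res_resolvent_identity hw hz (Ne.symm hzw)]
    rw [← neg_sub w z, inv_neg, neg_smul, ← smul_neg, neg_sub]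

end ResolventBasics

open MeasureTheory intervalIntegral Metric

section Helpers
variable {A : Type*} [NormedRing A] [NormedAlgebra ℂ A] [CompleteSpace A]

lemma circleIntegral_comp_CLM (L : A →L[ℂ] A) {f : ℂ → A} {c : ℂ} {ρ : ℝ}
    (hf : CircleIntegrable f c ρ) :
    L (∮ z in C(c, ρ), f z) = ∮ z in C(c, ρ), L (f z) := by
  have h1 : L (∮ z in C(c, ρ), f z)
      = ∫ θ in (0:ℝ)..(2*π), L ((deriv (circleMap c ρ) θ) • f (circleMap c ρ θ)) := by
    rw [circleIntegral]
    exact (L.intervalIntegral_comp_comm hf.out).symm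
  rw [h1, circleIntegral]
  congr 1
  funext θ
  rw [L.map_smul]

lemma mul_circleIntegral (x : A) {f : ℂ → A} {c : ℂ} {ρ : ℝ}
    (hf : CircleIntegrable f c ρ) :
    x * (∮ z in C(c, ρ), f z) = ∮ z in C(c, ρ), x * f z :=
  circleIntegral_comp_CLM (ContinuousLinearMap.mul ℂ A x) hf

lemma circleIntegral_mul (x : A) {f : ℂ → A} {c : ℂ} {ρ : ℝ}
    (hf : CircleIntegrable f c ρ) :
    (∮ z in C(c, ρ), f z) * x = ∮ z in C(c, ρ), f z * x :=
  circleIntegral_comp_CLM ((ContinuousLinearMap.mul ℂ A).flip x) hf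

lemma interval_integral_swap {F : ℝ → ℝ → A} (hF : Continuous (Function.uncurry F)) :
    (∫ θ in (0:ℝ)..(2*π), ∫ φ in (0:ℝ)..(2*π), F θ φ)
      = ∫ φ in (0:ℝ)..(2*π), ∫ θ in (0:ℝ)..(2*π), F θ φ := by
  have h2π : (0:ℝ) ≤ 2*π := by positivity
  have hint : Integrable (Function.uncurry F)
      ((volume.restrict (Set.Ioc (0:ℝ) (2*π))).prod (volume.restrict (Set.Ioc (0:ℝ) (2*π)))) := by
    rw [Measure.prod_restrict]
    have hc : IsCompact ((Set.Icc (0:ℝ) (2*π)) ×ˢ (Set.Icc (0:ℝ) (2*π))) :=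
      isCompact_Icc.prod isCompact_Icc
    exact ((hF.continuousOn.integrableOn_compact hc).mono_set
      (Set.prod_mono Set.Ioc_subset_Icc_self Set.Ioc_subset_Icc_self))
  calc (∫ θ in (0:ℝ)..(2*π), ∫ φ in (0:ℝ)..(2*π), F θ φ)
      = ∫ θ in Set.Ioc (0:ℝ) (2*π), ∫ φ in Set.Ioc (0:ℝ) (2*π), F θ φ := by
        rw [integral_of_le h2π]
        refine setIntegral_congr_fun measurableSet_Ioc (fun θ _ => ?_)
        rw [integral_of_le h2π]
    _ = ∫ φ in Set.Ioc (0:ℝ) (2*π), ∫ θ in Set.Ioc (0:ℝ) (2*π), F θ φ :=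
        integral_integral_swap hint
    _ = _ := by
        rw [integral_of_le h2π]
        refine setIntegral_congr_fun measurableSet_Ioc (fun φ _ => ?_)
        rw [integral_of_le h2π]

end Helpers

noncomputable section Gap
variable {A : Type*} [NormedRing A] [NormedAlgebra ℂ A] [CompleteSpace A]

/-- the punctured ball `0 < ‖z‖ < ε` consists of resolvent points of `a`. -/
def Gap (a : A) (ε : ℝ) : Prop := ∀ z : ℂ, z ≠ 0 → ‖z‖ < ε → IsUnit (z • (1 : A) - a)

variable {a : A} {ε : ℝ}

lemma Gap.isUnit_sphere (hg : Gap a ε) {ρ : ℝ} (h0 : 0 < ρ) (hε : ρ < ε) {z : ℂ}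
    (hz : z ∈ sphere (0:ℂ) ρ) : IsUnit (z • (1 : A) - a) := by
  rw [mem_sphere_iff_norm, sub_zero] at hz
  exact hg z (by intro h; rw [h, norm_zero] at hz; exact h0.ne' hz.symm) (hz ▸ hε)

lemma Gap.ne_zero_sphere {ρ : ℝ} (h0 : 0 < ρ) {z : ℂ} (hz : z ∈ sphere (0:ℂ) ρ) : z ≠ 0 := by
  rw [mem_sphere_iff_norm, sub_zero] at hz
  intro h; rw [h, norm_zero] at hz; exact h0.ne' hz.symm

lemma Gap.contOn (hg : Gap a ε) {ρ : ℝ} (h0 : 0 < ρ) (hε : ρ < ε) :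
    ContinuousOn (Res a) (sphere (0:ℂ) ρ) := fun z hz =>
  (Res_continuousAt (hg.isUnit_sphere h0 hε hz)).continuousWithinAt

lemma Gap.ci (hg : Gap a ε) {ρ : ℝ} (h0 : 0 < ρ) (hε : ρ < ε) :
    CircleIntegrable (Res a) 0 ρ :=
  (hg.contOn h0 hε).circleIntegrable h0.le

lemma Gap.ci_smul (hg : Gap a ε) {ρ : ℝ} (h0 : 0 < ρ) (hε : ρ < ε) {g : ℂ → ℂ}
    (hgc : ContinuousOn g (sphere (0:ℂ) ρ)) :
    CircleIntegrable (fun z => g z • Res a z) 0 ρ :=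
  (hgc.smul (hg.contOn h0 hε)).circleIntegrable h0.le

lemma Gap.radius_indep (hg : Gap a ε) {g : ℂ → ℂ}
    (hgd : ∀ z : ℂ, z ≠ 0 → DifferentiableAt ℂ g z) {r R : ℝ}
    (h0 : 0 < r) (hle : r ≤ R) (hR : R < ε) :
    (∮ z in C(0, R), g z • Res a z) = ∮ z in C(0, r), g z • Res a z := by
  have hdiff : ∀ z : ℂ, z ≠ 0 → ‖z‖ < ε → DifferentiableAt ℂ (fun w => g w • Res a w) z :=
    fun z hz hzε => (hgd z hz).smul (Res_differentiableAt (hg z hz hzε))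
  refine Complex.circleIntegral_eq_of_differentiable_on_annulus_off_countable h0 hle
    Set.countable_empty ?_ ?_
  · intro z hz
    obtain ⟨hz1, hz2⟩ := hz
    rw [mem_closedBall_iff_norm, sub_zero] at hz1
    rw [mem_ball_iff_norm, sub_zero, not_lt] at hz2
    have hz0 : z ≠ 0 := by
      intro h; rw [h, norm_zero] at hz2; exact (h0.trans_le hz2).ne rfl
    exact (hdiff z hz0 (lt_of_le_of_lt hz1 hR)).continuousAt.continuousWithinAt
  · intro z hz
    obtain ⟨⟨hz1, hz2⟩, -⟩ := hz
    rw [mem_ball_iff_norm, sub_zero] at hz1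
    rw [mem_closedBall_iff_norm, sub_zero, not_le] at hz2
    have hz0 : z ≠ 0 := by
      intro h; rw [h, norm_zero] at hz2; exact (h0.trans hz2).ne rfl
    exact hdiff z hz0 (hz1.trans hR)

/-- The Riesz projection complement data: `P a ρ` is the spectral projection at 0. -/
def RieszP (a : A) (ρ : ℝ) : A := (2 * π * Complex.I : ℂ)⁻¹ • ∮ z in C(0, ρ), Res a z

/-- Candidate generalized Drazin inverse. -/
def RieszB (a : A) (ρ : ℝ) : A :=
  -((2 * π * Complex.I : ℂ)⁻¹ • ∮ z in C(0, ρ), z⁻¹ • Res a z)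

lemma tpi_ne : (2 * π * Complex.I : ℂ) ≠ 0 := by
  simp [Real.pi_ne_zero, Complex.I_ne_zero]

lemma norm_tpi : ‖(2 * π * Complex.I : ℂ)‖ = 2 * π := by
  simp [norm_mul, abs_of_nonneg Real.pi_nonneg]

lemma contOn_inv_sphere {ρ : ℝ} (h0 : 0 < ρ) :
    ContinuousOn (fun z : ℂ => z⁻¹) (sphere (0:ℂ) ρ) := by
  intro z hz
  exact (continuousAt_inv₀ (Gap.ne_zero_sphere h0 hz)).continuousWithinAt

lemma int_inv_smul_const {ρ : ℝ} (h0 : 0 < ρ) (x : A) :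
    (∮ z in C(0, ρ), z⁻¹ • x) = (2 * π * Complex.I : ℂ) • x := by
  rw [circleIntegral.integral_smul_const]
  congr 1
  have h := circleIntegral.integral_sub_center_inv (0:ℂ) (R := ρ) h0.ne'
  simpa using h

lemma int_pow_smul_const {ρ : ℝ} (n : ℕ) (x : A) :
    (∮ z in C(0, ρ), z ^ n • x) = 0 := by
  rw [circleIntegral.integral_smul_const]
  have hn : (n : ℤ) ≠ -1 := by omega
  have h := circleIntegral.integral_sub_zpow_of_ne hn (0:ℂ) 0 ρ
  simp only [sub_zero, zpow_natCast] at h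
  rw [h, zero_smul]

lemma Gap.ci_inv_smul (hg : Gap a ε) {ρ : ℝ} (h0 : 0 < ρ) (hε : ρ < ε) :
    CircleIntegrable (fun z => z⁻¹ • Res a z) 0 ρ :=
  hg.ci_smul h0 hε (contOn_inv_sphere h0)

lemma Gap.ci_pow_smul (hg : Gap a ε) {ρ : ℝ} (h0 : 0 < ρ) (hε : ρ < ε) (n : ℕ) :
    CircleIntegrable (fun z => z ^ n • Res a z) 0 ρ :=
  hg.ci_smul h0 hε ((continuous_pow n).continuousOn)

lemma ci_inv_smul_const {ρ : ℝ} (h0 : 0 < ρ) (x : A) :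
    CircleIntegrable (fun z : ℂ => z⁻¹ • x) 0 ρ :=
  ((contOn_inv_sphere h0).smul continuousOn_const).circleIntegrable h0.le

lemma Gap.a_mul_RieszB (hg : Gap a ε) {ρ : ℝ} (h0 : 0 < ρ) (hε : ρ < ε) :
    a * RieszB a ρ = 1 - RieszP a ρ := by
  rw [RieszB, mul_neg, mul_smul_comm, mul_circleIntegral a (hg.ci_inv_smul h0 hε)]
  have e1 : (∮ z in C(0, ρ), a * (z⁻¹ • Res a z))
      = ∮ z in C(0, ρ), (Res a z - z⁻¹ • 1) := by
    refine circleIntegral.integral_congr h0.le (fun z hz => ?_)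
    have hz0 : z ≠ 0 := Gap.ne_zero_sphere h0 hz
    have hu := hg.isUnit_sphere h0 hε hz
    rw [mul_smul_comm, a_mul_Res hu, smul_sub, smul_smul, inv_mul_cancel₀ hz0, one_smul]
  rw [e1, circleIntegral.integral_sub (hg.ci h0 hε) (ci_inv_smul_const h0 1),
    int_inv_smul_const h0 (1:A), RieszP, smul_sub, smul_smul,
    inv_mul_cancel₀ tpi_ne, one_smul, neg_sub]

lemma Gap.RieszB_mul_a (hg : Gap a ε) {ρ : ℝ} (h0 : 0 < ρ) (hε : ρ < ε) :
    RieszB a ρ * a = 1 - RieszP a ρ := by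
  rw [RieszB, neg_mul, smul_mul_assoc, circleIntegral_mul a (hg.ci_inv_smul h0 hε)]
  have e1 : (∮ z in C(0, ρ), (z⁻¹ • Res a z) * a)
      = ∮ z in C(0, ρ), (Res a z - z⁻¹ • 1) := by
    refine circleIntegral.integral_congr h0.le (fun z hz => ?_)
    have hz0 : z ≠ 0 := Gap.ne_zero_sphere h0 hz
    have hu := hg.isUnit_sphere h0 hε hz
    rw [smul_mul_assoc, Res_mul_a hu, smul_sub, smul_smul, inv_mul_cancel₀ hz0, one_smul]
  rw [e1, circleIntegral.integral_sub (hg.ci h0 hε) (ci_inv_smul_const h0 1),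
    int_inv_smul_const h0 (1:A), RieszP, smul_sub, smul_smul,
    inv_mul_cancel₀ tpi_ne, one_smul, neg_sub]

lemma Gap.pow_mul_RieszP (hg : Gap a ε) {ρ : ℝ} (h0 : 0 < ρ) (hε : ρ < ε) (n : ℕ) :
    a ^ n * RieszP a ρ
      = (2 * π * Complex.I : ℂ)⁻¹ • ∮ z in C(0, ρ), z ^ n • Res a z := by
  induction n with
  | zero =>
    rw [pow_zero, one_mul, RieszP]
    congr 1
    refine circleIntegral.integral_congr h0.le (fun z _ => ?_)
    rw [pow_zero, one_smul]
  | succ n ih =>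
    rw [pow_succ', mul_assoc, ih, mul_smul_comm, mul_circleIntegral a (hg.ci_pow_smul h0 hε n)]
    have e1 : (∮ z in C(0, ρ), a * (z ^ n • Res a z))
        = ∮ z in C(0, ρ), (z ^ (n+1) • Res a z - z ^ n • 1) := by
      refine circleIntegral.integral_congr h0.le (fun z hz => ?_)
      have hu := hg.isUnit_sphere h0 hε hz
      rw [mul_smul_comm, a_mul_Res hu, smul_sub, smul_smul, ← pow_succ]
    have cic : CircleIntegrable (fun z : ℂ => z ^ n • (1:A)) 0 ρ :=
      (((continuous_pow n).continuousOn).smul continuousOn_const).circleIntegrable h0.le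
    rw [e1, circleIntegral.integral_sub (hg.ci_pow_smul h0 hε (n+1)) cic,
      int_pow_smul_const n (1:A), sub_zero]

lemma Gap.RieszP_radius (hg : Gap a ε) {r R : ℝ} (h0 : 0 < r) (hle : r ≤ R) (hR : R < ε) :
    RieszP a R = RieszP a r := by
  have e : ∀ ρ : ℝ, (∮ z in C(0, ρ), Res a z) = ∮ z in C(0, ρ), (1:ℂ) • Res a z := by
    intro ρ; congr 1; funext z; rw [one_smul]
  rw [RieszP, RieszP, e R, e r,
    hg.radius_indep (g := fun _ => (1:ℂ)) (fun z _ => differentiableAt_const _) h0 hle hR]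

lemma Gap.RieszB_radius (hg : Gap a ε) {r R : ℝ} (h0 : 0 < r) (hle : r ≤ R) (hR : R < ε) :
    RieszB a R = RieszB a r := by
  rw [RieszB, RieszB,
    hg.radius_indep (g := fun z => z⁻¹) (fun z hz => differentiableAt_inv hz) h0 hle hR]

lemma Gap.norm_pow_P_le (hg : Gap a ε) {ρ : ℝ} (h0 : 0 < ρ) (hε : ρ < ε) :
    ∃ C : ℝ, 0 ≤ C ∧ ∀ n : ℕ, ‖a ^ n * RieszP a ρ‖ ≤ ρ ^ (n+1) * C := by
  obtain ⟨C₀, hC₀⟩ := (isCompact_sphere (0:ℂ) ρ).exists_bound_of_continuousOn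
    (hg.contOn h0 hε)
  refine ⟨max C₀ 0, le_max_right _ _, fun n => ?_⟩
  rw [hg.pow_mul_RieszP h0 hε n, norm_smul]
  have h1 : ‖((2 * π * Complex.I : ℂ))⁻¹‖ = (2 * π)⁻¹ := by rw [norm_inv, norm_tpi]
  have h2 : ‖∮ z in C(0, ρ), z ^ n • Res a z‖ ≤ 2 * π * ρ * (ρ ^ n * max C₀ 0) := by
    refine circleIntegral.norm_integral_le_of_norm_le_const h0.le (fun z hz => ?_)
    have hz' : ‖z‖ = ρ := by rwa [mem_sphere_iff_norm, sub_zero] at hz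
    rw [norm_smul, norm_pow, hz']
    exact mul_le_mul_of_nonneg_left ((hC₀ z hz).trans (le_max_left _ _))
      (pow_nonneg h0.le n)
  calc ‖((2 * π * Complex.I : ℂ))⁻¹‖ * ‖∮ z in C(0, ρ), z ^ n • Res a z‖
      ≤ (2 * π)⁻¹ * (2 * π * ρ * (ρ ^ n * max C₀ 0)) := by
        rw [h1]
        exact mul_le_mul_of_nonneg_left h2 (by positivity)
    _ = ρ ^ (n+1) * max C₀ 0 := by
        field_simp
        ring

lemma Gap.sr_zero (hg : Gap a ε) (hε0 : 0 < ε)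
    (hcomm : a * RieszP a (ε/2) = RieszP a (ε/2) * a)
    (hidem : RieszP a (ε/2) * RieszP a (ε/2) = RieszP a (ε/2)) :
    spectralRadius ℂ (a * RieszP a (ε/2)) = 0 := by
  set P : A := RieszP a (ε/2) with hP
  set x : A := a * P with hx
  have hxpow : ∀ n : ℕ, x ^ (n+1) = a ^ (n+1) * P := by
    intro n
    induction n with
    | zero => rw [pow_one, pow_one]
    | succ n ih =>
      calc x ^ (n+2) = x ^ (n+1) * x := by rw [pow_succ]
        _ = (a ^ (n+1) * P) * (a * P) := by rw [ih]
        _ = a ^ (n+1) * (P * a) * P := by noncomm_ring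
        _ = a ^ (n+1) * (a * P) * P := by rw [← hcomm]
        _ = a ^ (n+2) * (P * P) := by noncomm_ring
        _ = a ^ (n+2) * P := by rw [hidem]
  -- the key estimate: spectral radius at most ρ for every 0 < ρ < ε
  have key : ∀ ρ : ℝ, 0 < ρ → ρ < ε → spectralRadius ℂ x ≤ ENNReal.ofReal ρ := by
    intro ρ hρ0 hρε
    have hρ'0 : 0 < ρ/2 := by linarith
    have hρ'ε : ρ/2 < ε := by linarith
    obtain ⟨C, hC0, hC⟩ := hg.norm_pow_P_le hρ'0 hρ'ε
    -- ‖x^(n+1)‖ * ‖1‖ ≤ (ρ/2)^(n+2) * C * ‖1‖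
    set D : ℝ := max ((ρ/2) * C * ‖(1:A)‖) 1 with hD
    have hD1 : 1 ≤ D := le_max_right _ _
    have hD0 : 0 < D := lt_of_lt_of_le one_pos hD1
    obtain ⟨N, hN⟩ := exists_pow_lt_of_lt_one (x := 1/D) (y := (1:ℝ)/2) (by positivity)
      (by norm_num)
    have hbound : ‖x ^ (N+1)‖ * ‖(1:A)‖ ≤ ρ ^ (N+1) := by
      have h1 : ‖x ^ (N+1)‖ ≤ (ρ/2) ^ (N+2) * C := by
        rw [hxpow N]
        have := hC (N+1)
        have hPε : RieszP a (ε/2) = RieszP a (ρ/2) := by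
          rcases le_or_gt (ρ/2) (ε/2) with hc | hc
          · exact hg.RieszP_radius hρ'0 hc (by linarith)
          · exact (hg.RieszP_radius (by linarith) hc.le (by linarith)).symm
        rw [hP, hPε]
        exact this
      calc ‖x ^ (N+1)‖ * ‖(1:A)‖ ≤ ((ρ/2) ^ (N+2) * C) * ‖(1:A)‖ :=
            mul_le_mul_of_nonneg_right h1 (norm_nonneg _)
        _ = (ρ/2) ^ (N+1) * ((ρ/2) * C * ‖(1:A)‖) := by ring
        _ ≤ (ρ/2) ^ (N+1) * D := by
            exact mul_le_mul_of_nonneg_left (le_max_left _ _) (by positivity)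
        _ = ρ ^ (N+1) * ((1/2) ^ (N+1) * D) := by
            rw [div_pow, ← mul_assoc]
            simp only [one_div, inv_pow]
            ring
        _ ≤ ρ ^ (N+1) * 1 := by
            refine mul_le_mul_of_nonneg_left ?_ (by positivity)
            have h2 : ((1:ℝ)/2) ^ (N+1) ≤ (1/2) ^ N := by
              refine pow_le_pow_of_le_one (by norm_num) (by norm_num) (by omega)
            calc ((1:ℝ)/2) ^ (N+1) * D ≤ (1/D) * D := by
                  refine mul_le_mul_of_nonneg_right ((h2.trans_lt hN).le) hD0.le
              _ = 1 := by field_simp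
        _ = ρ ^ (N+1) := mul_one _
    have hsr := spectrum.spectralRadius_le_pow_nnnorm_pow_one_div ℂ x N
    refine hsr.trans ?_
    have hmul : (‖x ^ (N+1)‖₊ : ℝ≥0∞) ^ (1/(N+1) : ℝ) * (‖(1:A)‖₊ : ℝ≥0∞) ^ (1/(N+1) : ℝ)
        = ((‖x ^ (N+1)‖₊ : ℝ≥0∞) * (‖(1:A)‖₊ : ℝ≥0∞)) ^ (1/(N+1) : ℝ) := by
      rw [ENNReal.mul_rpow_of_nonneg _ _ (by positivity)]
    rw [hmul]
    have hle1 : ((‖x ^ (N+1)‖₊ : ℝ≥0∞) * (‖(1:A)‖₊ : ℝ≥0∞))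
        ≤ ENNReal.ofReal (ρ ^ (N+1)) := by
      rw [← ENNReal.coe_mul, ← ENNReal.ofReal_coe_nnreal]
      exact ENNReal.ofReal_le_ofReal (by push_cast; exact hbound)
    calc ((‖x ^ (N+1)‖₊ : ℝ≥0∞) * (‖(1:A)‖₊ : ℝ≥0∞)) ^ (1/(N+1) : ℝ)
        ≤ (ENNReal.ofReal (ρ ^ (N+1))) ^ (1/(N+1) : ℝ) :=
          ENNReal.rpow_le_rpow hle1 (by positivity)
      _ = ENNReal.ofReal ρ := by
          rw [ENNReal.ofReal_pow hρ0.le, ← ENNReal.rpow_natCast (ENNReal.ofReal ρ) (N+1),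
            ← ENNReal.rpow_mul]
          push_cast
          rw [mul_one_div_cancel (by positivity : ((N:ℝ)+1) ≠ 0), ENNReal.rpow_one]
  -- conclude
  refine le_antisymm ?_ zero_le
  refine ENNReal.le_of_forall_pos_le_add (fun δ hδ _ => ?_)
  rw [zero_add]
  set ρ : ℝ := min (ε/2) δ with hρ
  have hρ0 : 0 < ρ := lt_min (by linarith) hδ
  have hρε : ρ < ε := lt_of_le_of_lt (min_le_left _ _) (by linarith)
  refine (key ρ hρ0 hρε).trans ?_
  calc ENNReal.ofReal ρ ≤ ENNReal.ofReal δ := ENNReal.ofReal_le_ofReal (min_le_right _ _)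
    _ = (δ : ℝ≥0∞) := ENNReal.ofReal_coe_nnreal

lemma int_inv_eq {ρ : ℝ} (h0 : 0 < ρ) : (∮ w in C(0, ρ), w⁻¹) = 2 * π * Complex.I := by
  have h := circleIntegral.integral_sub_center_inv (0:ℂ) (R := ρ) h0.ne'
  simpa using h

lemma int_sub_inv_outside {ρ : ℝ} {z : ℂ} (h0 : 0 < ρ) (hz : ρ < ‖z‖) :
    (∮ w in C(0, ρ), (w - z)⁻¹) = 0 := by
  have hne : ∀ w : ℂ, w ∈ closedBall (0:ℂ) ρ → w - z ≠ 0 := by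
    intro w hw
    rw [mem_closedBall_iff_norm, sub_zero] at hw
    intro h
    rw [sub_eq_zero] at h
    rw [h] at hw
    linarith
  refine Complex.circleIntegral_eq_zero_of_differentiable_on_off_countable h0.le
    Set.countable_empty ?_ ?_
  · intro w hw
    exact ((continuousAt_id.sub continuousAt_const).inv₀ (hne w hw)).continuousWithinAt
  · intro w hw
    exact (differentiableAt_id.sub_const z).inv (hne w (ball_subset_closedBall hw.1))

lemma int_inv_mul_inv {ρ : ℝ} {z : ℂ} (h0 : 0 < ρ) (hz : ρ < ‖z‖) :
    (∮ w in C(0, ρ), w⁻¹ * (w - z)⁻¹) = (-(2 * π * Complex.I)) * z⁻¹ := by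
  have hz0 : z ≠ 0 := by
    intro h; rw [h, norm_zero] at hz; linarith
  have hpt : ∀ w : ℂ, w ∈ sphere (0:ℂ) ρ →
      w⁻¹ * (w - z)⁻¹ = z⁻¹ • ((w - z)⁻¹ - w⁻¹) := by
    intro w hw
    have hw0 : w ≠ 0 := Gap.ne_zero_sphere h0 hw
    have hwz : w - z ≠ 0 := by
      rw [mem_sphere_iff_norm, sub_zero] at hw
      intro h
      rw [sub_eq_zero] at h
      rw [h] at hw
      rw [hw] at hz
      linarith
    rw [smul_eq_mul]
    field_simp
    ring
  rw [circleIntegral.integral_congr h0.le hpt, circleIntegral.integral_smul]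
  have hci1 : CircleIntegrable (fun w : ℂ => (w - z)⁻¹) 0 ρ := by
    refine ContinuousOn.circleIntegrable h0.le (fun w hw => ?_)
    have hwz : w - z ≠ 0 := by
      rw [mem_sphere_iff_norm, sub_zero] at hw
      intro h
      rw [sub_eq_zero] at h
      rw [h] at hw
      rw [hw] at hz
      linarith
    exact ((continuousAt_id.sub continuousAt_const).inv₀ hwz).continuousWithinAt
  have hci2 : CircleIntegrable (fun w : ℂ => w⁻¹) 0 ρ :=
    (contOn_inv_sphere h0).circleIntegrable h0.le
  rw [circleIntegral.integral_sub hci1 hci2, int_sub_inv_outside h0 hz, int_inv_eq h0,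
    zero_sub, smul_eq_mul]
  ring

lemma Gap.T_swap (hg : Gap a ε) (hε0 : 0 < ε) :
    (∮ w in C(0, ε/4), w⁻¹ • (∮ z in C(0, ε/2), (w - z)⁻¹ • Res a z))
      = ∮ z in C(0, ε/2), (∮ w in C(0, ε/4), w⁻¹ * (w - z)⁻¹) • Res a z := by
  have h40 : 0 < ε/4 := by linarith
  have h20 : 0 < ε/2 := by linarith
  -- abbreviations
  set c₁ : ℝ → ℂ := circleMap 0 (ε/4) with hc₁
  set c₂ : ℝ → ℂ := circleMap 0 (ε/2) with hc₂
  have hc₁ne : ∀ θ, c₁ θ ≠ 0 := fun θ => circleMap_ne_center h40.ne'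
  have hc₂ne : ∀ φ, c₂ φ ≠ 0 := fun φ => circleMap_ne_center h20.ne'
  have habs1 : ∀ θ, ‖c₁ θ‖ = ε/4 := by
    intro θ; rw [hc₁, norm_circleMap_zero, abs_of_pos h40]
  have habs2 : ∀ φ, ‖c₂ φ‖ = ε/2 := by
    intro φ; rw [hc₂, norm_circleMap_zero, abs_of_pos h20]
  have hc₁₂ne : ∀ θ φ, c₁ θ - c₂ φ ≠ 0 := by
    intro θ φ h
    rw [sub_eq_zero] at h
    have := habs1 θ
    rw [h, habs2 φ] at this
    linarith
  have hUnit : ∀ φ, IsUnit ((c₂ φ) • (1:A) - a) := by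
    intro φ
    exact hg (c₂ φ) (hc₂ne φ) (by rw [habs2]; linarith)
  have hRescont : Continuous fun φ => Res a (c₂ φ) := by
    rw [continuous_iff_continuousAt]
    intro φ
    exact (Res_continuousAt (hUnit φ)).comp (continuous_circleMap 0 (ε/2)).continuousAt
  -- the common integrand
  set H : ℝ → ℝ → A := fun θ φ =>
    ((c₁ θ * Complex.I) * ((c₁ θ)⁻¹ * ((c₂ φ * Complex.I) * (c₁ θ - c₂ φ)⁻¹))) • Res a (c₂ φ)
    with hH
  have hHcont : Continuous (Function.uncurry H) := by
    have h1 : Continuous fun p : ℝ × ℝ => c₁ p.1 := (continuous_circleMap 0 (ε/4)).comp continuous_fst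
    have h2 : Continuous fun p : ℝ × ℝ => c₂ p.2 := (continuous_circleMap 0 (ε/2)).comp continuous_snd
    refine Continuous.smul ?_ (hRescont.comp continuous_snd)
    refine ((h1.mul continuous_const).mul (Continuous.mul ?_ ?_))
    · exact h1.inv₀ (fun p => hc₁ne p.1)
    · exact ((h2.mul continuous_const).mul ((h1.sub h2).inv₀ (fun p => hc₁₂ne p.1 p.2)))
  have hLHS : (∮ w in C(0, ε/4), w⁻¹ • (∮ z in C(0, ε/2), (w - z)⁻¹ • Res a z))
      = ∫ θ in (0:ℝ)..(2*π), ∫ φ in (0:ℝ)..(2*π), H θ φ := by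
    rw [circleIntegral]
    congr 1
    funext θ
    rw [circleIntegral]
    simp only [deriv_circleMap]
    rw [← intervalIntegral.integral_smul, ← intervalIntegral.integral_smul]
    congr 1
    funext φ
    simp only [hH, smul_smul]
    rfl
  have hRHS : (∮ z in C(0, ε/2), (∮ w in C(0, ε/4), w⁻¹ * (w - z)⁻¹) • Res a z)
      = ∫ φ in (0:ℝ)..(2*π), ∫ θ in (0:ℝ)..(2*π), H θ φ := by
    rw [circleIntegral]
    congr 1
    funext φ
    rw [circleIntegral]
    simp only [deriv_circleMap, smul_eq_mul]
    rw [← intervalIntegral.integral_smul_const, ← intervalIntegral.integral_smul]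
    congr 1
    funext θ
    rw [smul_smul, hH]
    congr 1
    ring
  rw [hLHS, hRHS]
  exact interval_integral_swap hHcont

lemma Gap.W_mul_P (hg : Gap a ε) (hε0 : 0 < ε) :
    (∮ w in C(0, ε/4), w⁻¹ • Res a w) * (∮ z in C(0, ε/2), Res a z) = 0 := by
  have h40 : 0 < ε/4 := by linarith
  have h4ε : ε/4 < ε := by linarith
  have h20 : 0 < ε/2 := by linarith
  have h2ε : ε/2 < ε := by linarith
  have h42 : ε/4 ≤ ε/2 := by linarith
  set Pi : A := ∮ z in C(0, ε/2), Res a z with hPi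
  set W₂ : A := ∮ z in C(0, ε/2), z⁻¹ • Res a z with hW₂
  set W₁ : A := ∮ w in C(0, ε/4), w⁻¹ • Res a w with hW₁
  set F₁ : ℂ → A := fun w => (w⁻¹ • Res a w) * Pi with hF₁
  set F₂ : ℂ → A := fun w => (2 * π * Complex.I : ℂ) • (w⁻¹ • Res a w) with hF₂
  set F₃ : ℂ → A := fun w => w⁻¹ • (∮ z in C(0, ε/2), (w - z)⁻¹ • Res a z) with hF₃
  -- pointwise identity on the small sphere
  have hstep2 : ∀ w ∈ sphere (0:ℂ) (ε/4), F₁ w = F₃ w + F₂ w := by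
    intro w hw
    have hw0 : w ≠ 0 := Gap.ne_zero_sphere h40 hw
    have hwnorm : ‖w‖ = ε/4 := by rwa [mem_sphere_iff_norm, sub_zero] at hw
    have hwball : w ∈ ball (0:ℂ) (ε/2) := by
      rw [mem_ball_iff_norm, sub_zero, hwnorm]; linarith
    have hwu : IsUnit (w • (1:A) - a) := hg w hw0 (by rw [hwnorm]; linarith)
    -- Res a w * Pi
    have hmulin : Res a w * Pi = ∮ z in C(0, ε/2), Res a w * Res a z :=
      mul_circleIntegral (Res a w) (hg.ci h20 h2ε)
    have hptz : ∀ z ∈ sphere (0:ℂ) (ε/2), Res a w * Res a z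
        = (w - z)⁻¹ • Res a z - (w - z)⁻¹ • Res a w := by
      intro z hz
      have hznorm : ‖z‖ = ε/2 := by rwa [mem_sphere_iff_norm, sub_zero] at hz
      have hz0 : z ≠ 0 := Gap.ne_zero_sphere h20 hz
      have hzu : IsUnit (z • (1:A) - a) := hg z hz0 (by rw [hznorm]; linarith)
      have hwz : w ≠ z := by
        intro h; rw [h, hznorm] at hwnorm; linarith
      rw [Res_resolvent_identity hwu hzu hwz, smul_sub]
    have hciA : CircleIntegrable (fun z => (w - z)⁻¹ • Res a z) 0 (ε/2) := by
      refine hg.ci_smul h20 h2ε ?_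
      intro z hz
      have hznorm : ‖z‖ = ε/2 := by rwa [mem_sphere_iff_norm, sub_zero] at hz
      have hwz : w - z ≠ 0 := by
        intro h; rw [sub_eq_zero] at h; rw [← h, hwnorm] at hznorm; linarith
      exact ((continuousAt_const.sub continuousAt_id).inv₀ hwz).continuousWithinAt
    have hciB : CircleIntegrable (fun z : ℂ => (w - z)⁻¹ • Res a w) 0 (ε/2) := by
      refine ContinuousOn.circleIntegrable h20.le ?_
      intro z hz
      have hznorm : ‖z‖ = ε/2 := by rwa [mem_sphere_iff_norm, sub_zero] at hz
      have hwz : w - z ≠ 0 := by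
        intro h; rw [sub_eq_zero] at h; rw [← h, hwnorm] at hznorm; linarith
      exact (((continuousAt_const.sub continuousAt_id).inv₀ hwz).smul
        continuousAt_const).continuousWithinAt
    have hint2 : (∮ z in C(0, ε/2), (w - z)⁻¹ • Res a w)
        = (-(2 * π * Complex.I)) • Res a w := by
      rw [circleIntegral.integral_smul_const]
      congr 1
      have : ∀ z ∈ sphere (0:ℂ) (ε/2), (w - z)⁻¹ = (-1 : ℂ) • (z - w)⁻¹ := by
        intro z hz
        rw [smul_eq_mul, ← neg_sub, inv_neg]; ring
      rw [circleIntegral.integral_congr h20.le this, circleIntegral.integral_smul,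
        circleIntegral.integral_sub_inv_of_mem_ball hwball, smul_eq_mul]
      ring
    have : Res a w * Pi = (∮ z in C(0, ε/2), (w - z)⁻¹ • Res a z)
        + (2 * π * Complex.I) • Res a w := by
      rw [hmulin, circleIntegral.integral_congr h20.le hptz,
        circleIntegral.integral_sub hciA hciB, hint2]
      rw [neg_smul, sub_neg_eq_add]
    rw [hF₁, hF₃, hF₂]
    simp only
    rw [smul_mul_assoc, this, smul_add, smul_smul, mul_comm, ← smul_smul]
  -- integrability
  have hciW₁ : CircleIntegrable (fun w => w⁻¹ • Res a w) 0 (ε/4) := hg.ci_inv_smul h40 h4ε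
  have hciF₁ : CircleIntegrable F₁ 0 (ε/4) := by
    refine ContinuousOn.circleIntegrable h40.le ?_
    exact (((contOn_inv_sphere h40).smul (hg.contOn h40 h4ε)).mul continuousOn_const)
  have hciF₂ : CircleIntegrable F₂ 0 (ε/4) := by
    refine ContinuousOn.circleIntegrable h40.le ?_
    exact continuousOn_const.smul ((contOn_inv_sphere h40).smul (hg.contOn h40 h4ε))
  have hciF₃ : CircleIntegrable F₃ 0 (ε/4) := by
    have heq : (fun θ => F₃ (circleMap 0 (ε/4) θ)) =
        fun θ => F₁ (circleMap 0 (ε/4) θ) - F₂ (circleMap 0 (ε/4) θ) := by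
      funext θ
      have hm := hstep2 (circleMap 0 (ε/4) θ) (circleMap_mem_sphere 0 h40.le θ)
      rw [eq_sub_iff_add_eq, ← hm]
    show IntervalIntegrable (fun θ => F₃ (circleMap 0 (ε/4) θ)) MeasureTheory.volume 0 (2*π)
    rw [heq]
    exact hciF₁.sub hciF₂
  -- put it together
  have hstep2' : ∀ w ∈ sphere (0:ℂ) (ε/4), F₃ w = F₁ w - F₂ w := by
    intro w hw
    rw [eq_sub_iff_add_eq, ← hstep2 w hw]
  have h2 : (∮ w in C(0, ε/4), F₃ w) = (∮ w in C(0, ε/4), F₁ w) - ∮ w in C(0, ε/4), F₂ w := by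
    rw [circleIntegral.integral_congr h40.le hstep2',
      circleIntegral.integral_sub hciF₁ hciF₂]
  have hsplit : (∮ w in C(0, ε/4), F₁ w) = (∮ w in C(0, ε/4), F₃ w) + ∮ w in C(0, ε/4), F₂ w := by
    rw [h2]
    abel
  -- compute ∮ F₃ via the swap
  have hT : (∮ w in C(0, ε/4), F₃ w) = (-(2 * π * Complex.I)) • W₂ := by
    rw [hF₃]
    simp only
    rw [hg.T_swap hε0]
    have hpt : ∀ z ∈ sphere (0:ℂ) (ε/2),
        (∮ w in C(0, ε/4), w⁻¹ * (w - z)⁻¹) • Res a z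
          = (-(2 * π * Complex.I)) • (z⁻¹ • Res a z) := by
      intro z hz
      have hznorm : ‖z‖ = ε/2 := by rwa [mem_sphere_iff_norm, sub_zero] at hz
      rw [int_inv_mul_inv h40 (by rw [hznorm]; linarith), mul_smul]
    rw [circleIntegral.integral_congr h20.le hpt, circleIntegral.integral_smul]
  -- compute ∮ F₂
  have hF₂int : (∮ w in C(0, ε/4), F₂ w) = (2 * π * Complex.I) • W₁ := by
    rw [hF₂, hW₁]
    exact circleIntegral.integral_smul _ _ _ _
  -- radius independence : W₂ = W₁
  have hWrad : W₂ = W₁ :=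
    hg.radius_indep (g := fun z => z⁻¹) (fun z hz => differentiableAt_inv hz) h40 h42 h2ε
  have hfin : (∮ w in C(0, ε/4), F₁ w) = 0 := by
    rw [hsplit, hT, hF₂int, hWrad, neg_smul, neg_add_cancel]
  rw [hW₁, circleIntegral_mul Pi hciW₁]
  exact hfin

lemma Gap.B_mul_P_zero (hg : Gap a ε) (hε0 : 0 < ε) :
    RieszB a (ε/2) * RieszP a (ε/2) = 0 := by
  have h40 : 0 < ε/4 := by linarith
  have h42 : ε/4 ≤ ε/2 := by linarith
  have h2ε : ε/2 < ε := by linarith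
  rw [hg.RieszB_radius h40 h42 h2ε, RieszB, RieszP, neg_mul, smul_mul_assoc,
    mul_smul_comm, hg.W_mul_P hε0, smul_zero, smul_zero, neg_zero]

lemma Gap.gd (hg : Gap a ε) (hε0 : 0 < ε) :
    ∃ b : A, a * b = b * a ∧ b * a * b = b ∧ spectralRadius ℂ (a * (1 - a * b)) = 0 := by
  have h20 : 0 < ε/2 := by linarith
  have h2ε : ε/2 < ε := by linarith
  set P : A := RieszP a (ε/2) with hPdef
  set B : A := RieszB a (ε/2) with hBdef
  have hab : a * B = 1 - P := hg.a_mul_RieszB h20 h2ε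
  have hba : B * a = 1 - P := hg.RieszB_mul_a h20 h2ε
  have hcomm : a * B = B * a := hab.trans hba.symm
  have hBP : B * P = 0 := hg.B_mul_P_zero hε0
  have hP' : 1 - a * B = P := by rw [hab, sub_sub_cancel]
  have hPB : P * B = 0 := by
    calc P * B = (1 - a * B) * B := by rw [hP']
      _ = B - a * B * B := by noncomm_ring
      _ = B - (B * a) * B := by rw [hcomm]
      _ = B - B * (a * B) := by rw [mul_assoc]
      _ = B - B * (1 - P) := by rw [hab]
      _ = B * P := by noncomm_ring
      _ = 0 := hBP
  have hidem : P * P = P := by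
    calc P * P = (1 - a * B) * P := by rw [hP']
      _ = P - a * (B * P) := by noncomm_ring
      _ = P := by rw [hBP, mul_zero, sub_zero]
  have hbab : B * a * B = B := by
    rw [hba, sub_mul, one_mul, hPB, sub_zero]
  have hcomm' : a * P = P * a := by
    rw [← hP']
    calc a * (1 - a * B) = a - a * (a * B) := by noncomm_ring
      _ = a - a * (B * a) := by rw [hcomm]
      _ = (1 - a * B) * a := by noncomm_ring
  have hq : spectralRadius ℂ (a * (1 - a * B)) = 0 := by
    rw [hP']
    exact hg.sr_zero hε0 hcomm' hidem
  exact ⟨B, hcomm, hbab, hq⟩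


lemma gd_isUnit {a b : A} (hab : a * b = b * a) (hbab : b * a * b = b)
    (hqn : spectralRadius ℂ (a * (1 - a * b)) = 0) {z : ℂ} (hz : z ≠ 0)
    (hsmall : ‖z • b‖ < 1) : IsUnit (z • (1 : A) - a) := by
  have Cab : Commute a b := hab
  have f2 : b * (a * b) = b := by rw [← mul_assoc]; exact hbab
  have f1 : (a * b) * (a * b) = a * b := by rw [mul_assoc a b (a * b), f2]
  have f4 : a * (a * b) = (a * b) * a := by rw [mul_assoc, ← hab]
  have hw_eq : a * (1 - a * b) = a - a * (a * b) := by noncomm_ring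
  -- commutation facts
  have Cb : Commute (z • (1 : A) - a) b :=
    Commute.sub_left ((Commute.one_left b).smul_left z) Cab
  have Ca : Commute (z • (1 : A) - a) a :=
    Commute.sub_left ((Commute.one_left a).smul_left z) (Commute.refl a)
  have Cp : Commute (z • (1 : A) - a) (1 - a * b) :=
    (Commute.one_right _).sub_right (Ca.mul_right Cb)
  have Cw : Commute (z • (1 : A) - a) (a * (1 - a * b)) := Ca.mul_right Cp
  have CmE : Commute (z • (1 : A) - a) (1 - z • b) :=
    (Commute.one_right _).sub_right (Cb.smul_right z)
  have Cmu' : Commute (z • (1 : A) - a) (z • (1 : A) - a * (1 - a * b)) :=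
    ((Commute.one_right _).smul_right z).sub_right Cw
  -- the unit 1 - z • b
  let E : Aˣ := Units.oneSub (z • b) hsmall
  have hEval : (E : A) = 1 - z • b := rfl
  -- the unit z • 1 - w coming from quasinilpotency
  have hres : z ∈ resolventSet ℂ (a * (1 - a * b)) :=
    spectrum.mem_resolventSet_of_spectralRadius_lt
      (by rw [hqn]; exact ENNReal.coe_pos.mpr (nnnorm_pos.mpr hz))
  have hresU : IsUnit (z • (1 : A) - a * (1 - a * b)) := by
    rw [← Algebra.algebraMap_eq_smul_one]; exact hres
  obtain ⟨u, hu⟩ := hresU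
  have hCmE : Commute (z • (1 : A) - a) (E : A) := by rw [hEval]; exact CmE
  have hCmEi : Commute (z • (1 : A) - a) ((E⁻¹ : Aˣ) : A) := hCmE.units_inv_right
  have hCmu : Commute (z • (1 : A) - a) (u : A) := by rw [hu]; exact Cmu'
  have hCmui : Commute (z • (1 : A) - a) ((u⁻¹ : Aˣ) : A) := hCmu.units_inv_right
  -- key products
  have htq : (z • b) * (a * b) = z • b := by rw [smul_mul_assoc, f2]
  have key1 : z • b - a * b = -((1 - z • b) * (a * b)) := by
    rw [sub_mul, one_mul, htq]; noncomm_ring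
  have hwq : (a * (1 - a * b)) * (a * b) = 0 := by
    rw [hw_eq, sub_mul, mul_assoc a (a * b) (a * b), f1, sub_self]
  have hwp : (a * (1 - a * b)) * (1 - a * b) = a * (1 - a * b) := by
    rw [mul_sub, hwq, mul_one, sub_zero]
  have hmb : (z • (1 : A) - a) * b = z • b - a * b := by
    rw [sub_mul, smul_mul_assoc, one_mul]
  have hmp : (z • (1 : A) - a) * (1 - a * b) = (u : A) * (1 - a * b) := by
    rw [hu, sub_mul, sub_mul, hwp]
  have hbm : b * (z • (1 : A) - a) = z • b - a * b := Cb.eq.symm.trans hmb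
  have hpm : (1 - a * b) * (z • (1 : A) - a) = (u : A) * (1 - a * b) :=
    Cp.eq.symm.trans hmp
  -- the two-sided inverse
  refine ⟨⟨z • (1 : A) - a, -(((E⁻¹ : Aˣ) : A) * b) + ((u⁻¹ : Aˣ) : A) * (1 - a * b), ?_, ?_⟩, rfl⟩
  · have s1 : (z • (1 : A) - a) * (((E⁻¹ : Aˣ) : A) * b)
        = ((E⁻¹ : Aˣ) : A) * (z • b - a * b) := by
      rw [← mul_assoc, hCmEi.eq, mul_assoc, hmb]
    have s2 : (z • (1 : A) - a) * (((u⁻¹ : Aˣ) : A) * (1 - a * b)) = 1 - a * b := by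
      rw [← mul_assoc, hCmui.eq, mul_assoc, hmp, ← mul_assoc]
      simp
    show (z • (1 : A) - a) * (-(((E⁻¹ : Aˣ) : A) * b) + ((u⁻¹ : Aˣ) : A) * (1 - a * b)) = 1
    rw [mul_add, mul_neg, s1, s2, key1, mul_neg, neg_neg, ← hEval, ← mul_assoc]
    simp
  · have s1 : (((E⁻¹ : Aˣ) : A) * b) * (z • (1 : A) - a)
        = ((E⁻¹ : Aˣ) : A) * (z • b - a * b) := by
      rw [mul_assoc, hbm]
    have s2 : (((u⁻¹ : Aˣ) : A) * (1 - a * b)) * (z • (1 : A) - a) = 1 - a * b := by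
      rw [mul_assoc, hpm, ← mul_assoc]
      simp
    show (-(((E⁻¹ : Aˣ) : A) * b) + ((u⁻¹ : Aˣ) : A) * (1 - a * b)) * (z • (1 : A) - a) = 1
    rw [add_mul, neg_mul, s1, s2, key1, mul_neg, neg_neg, ← hEval, ← mul_assoc]
    simp


lemma gap_of_gd {a b : A} (hab : a * b = b * a) (hbab : b * a * b = b)
    (hqn : spectralRadius ℂ (a * (1 - a * b)) = 0) :
    Gap a (1/(‖b‖+1)) := by
  intro z hz hznorm
  refine gd_isUnit hab hbab hqn hz ?_
  rw [norm_smul]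
  have hb0 : (0:ℝ) ≤ ‖b‖ := norm_nonneg b
  have hz0 : (0:ℝ) ≤ ‖z‖ := norm_nonneg z
  have h1 : (0:ℝ) < ‖b‖ + 1 := by linarith
  have h2 : (1/(‖b‖+1))*(‖b‖+1) = 1 := by field_simp
  have h3 : ‖z‖ * (‖b‖+1) < (1/(‖b‖+1))*(‖b‖+1) :=
    mul_lt_mul_of_pos_right hznorm h1
  nlinarith

lemma isUnit_of_isUnit_mul_left {x y : A} (hx : IsUnit x) (hxy : IsUnit (x * y)) :
    IsUnit y := by
  have h : y = ↑hx.unit⁻¹ * (x * y) := by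
    rw [← mul_assoc, IsUnit.val_inv_mul, one_mul]
  rw [h]
  exact (hx.unit⁻¹.isUnit).mul hxy

lemma cubic_identity {x₁ x₂ x₃ : A} {α₁ α₂ β : ℂ}
    (h1 : x₁ * x₂ + x₁ * x₃ + x₂ * x₃ = α₁ • (1 : A) + α₂ • (x₁ + x₂ + x₃))
    (h2 : x₁ * x₂ * x₃ = β • (x₁ + x₂ + x₃)) (z : ℂ) :
    (z • (1:A) - x₁) * ((z • (1:A) - x₂) * (z • (1:A) - x₃))
      = (z^3 + α₁ * z) • (1:A) - (z^2 - α₂ * z + β) • (x₁ + x₂ + x₃) := by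
  have e1 : (z • (1:A) - x₁) * ((z • (1:A) - x₂) * (z • (1:A) - x₃))
      = (z^3) • (1:A) - (z^2) • (x₁ + x₂ + x₃)
        + z • (x₁ * x₂ + x₁ * x₃ + x₂ * x₃) - x₁ * x₂ * x₃ := by
    simp only [mul_sub, sub_mul, smul_mul_assoc, mul_smul_comm, smul_smul, mul_one,
      one_mul, ← mul_assoc]
    module
  rw [e1, h1, h2]
  module

end Gap


theorem stmt_8 {A : Type*} [NormedRing A] [NormedAlgebra ℂ A] [CompleteSpace A]
    (x₁ x₂ x₃ : A) (α₁ α₂ β : ℂ) (hβ : β ≠ 0)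
    (h1 : x₁ * x₂ + x₁ * x₃ + x₂ * x₃ = α₁ • (1 : A) + α₂ • (x₁ + x₂ + x₃))
    (h2 : x₁ * x₂ * x₃ = β • (x₁ + x₂ + x₃))
    (g1 : GDrazinInvertible x₁) (g2 : GDrazinInvertible x₂)
    (gs : GDrazinInvertible (x₁ + x₂ + x₃)) :
    GDrazinInvertible x₃ := by
  obtain ⟨b₁, hb₁c, hb₁i, hb₁q⟩ := g1
  obtain ⟨b₂, hb₂c, hb₂i, hb₂q⟩ := g2
  obtain ⟨bs, hbsc, hbsi, hbsq⟩ := gs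
  have hg1 : Gap x₁ (1/(‖b₁‖+1)) := gap_of_gd hb₁c hb₁i hb₁q
  have hg2 : Gap x₂ (1/(‖b₂‖+1)) := gap_of_gd hb₂c hb₂i hb₂q
  have hgs : Gap (x₁ + x₂ + x₃) (1/(‖bs‖+1)) := gap_of_gd hbsc hbsi hbsq
  set ε₁ : ℝ := 1/(‖b₁‖+1) with hε₁def
  set ε₂ : ℝ := 1/(‖b₂‖+1) with hε₂def
  set ε₃ : ℝ := 1/(‖bs‖+1) with hε₃def
  have hε₁pos : 0 < ε₁ := by positivity
  have hε₂pos : 0 < ε₂ := by positivity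
  have hε₃pos : 0 < ε₃ := by positivity
  have hβ' : (0:ℝ) < ‖β‖ := norm_pos_iff.mpr hβ
  set c₁ : ℝ := ‖β‖/(2*(1+‖α₂‖)) with hc₁def
  set c₂ : ℝ := ε₃*‖β‖/(2*(1+‖α₁‖)) with hc₂def
  set c₃ : ℝ := if α₁ = 0 then 1 else ‖α₁‖ with hc₃def
  have hα₂1 : (0:ℝ) < 1 + ‖α₂‖ := by positivity
  have hα₁1 : (0:ℝ) < 1 + ‖α₁‖ := by positivity
  have hc₁pos : 0 < c₁ := by positivity
  have hc₂pos : 0 < c₂ := by positivity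
  have hc₃pos : 0 < c₃ := by
    rw [hc₃def]
    split_ifs with h
    · norm_num
    · exact norm_pos_iff.mpr h
  set ε' : ℝ := min (min ε₁ ε₂) (min (min 1 c₃) (min c₁ c₂)) with hε'def
  have hε'pos : 0 < ε' :=
    lt_min (lt_min hε₁pos hε₂pos) (lt_min (lt_min one_pos hc₃pos) (lt_min hc₁pos hc₂pos))
  have hle₁ : ε' ≤ ε₁ := (min_le_left _ _).trans (min_le_left _ _)
  have hle₂ : ε' ≤ ε₂ := (min_le_left _ _).trans (min_le_right _ _)
  have hle1 : ε' ≤ 1 := (min_le_right _ _).trans ((min_le_left _ _).trans (min_le_left _ _))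
  have hlec₃ : ε' ≤ c₃ := (min_le_right _ _).trans ((min_le_left _ _).trans (min_le_right _ _))
  have hlec₁ : ε' ≤ c₁ := (min_le_right _ _).trans ((min_le_right _ _).trans (min_le_left _ _))
  have hlec₂ : ε' ≤ c₂ := (min_le_right _ _).trans ((min_le_right _ _).trans (min_le_right _ _))
  have hgap : Gap x₃ ε' := by
    intro l hl0 hlε
    have hu1 : IsUnit (l • (1:A) - x₁) := hg1 l hl0 (lt_of_lt_of_le hlε hle₁)
    have hu2 : IsUnit (l • (1:A) - x₂) := hg2 l hl0 (lt_of_lt_of_le hlε hle₂)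
    have hl1 : ‖l‖ ≤ 1 := le_of_lt (lt_of_lt_of_le hlε hle1)
    have hlc₁ : ‖l‖ < c₁ := lt_of_lt_of_le hlε hlec₁
    have hlc₂ : ‖l‖ < c₂ := lt_of_lt_of_le hlε hlec₂
    have hlc₃ : ‖l‖ < c₃ := lt_of_lt_of_le hlε hlec₃
    -- the quadratic is nonvanishing
    have hqβ : ‖l^2 - α₂*l‖ ≤ ‖l‖*(‖l‖+‖α₂‖) := by
      have he : l^2 - α₂*l = l*(l - α₂) := by ring
      rw [he, norm_mul]
      exact mul_le_mul_of_nonneg_left (norm_sub_le _ _) (norm_nonneg l)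
    have hsmall : ‖l^2 - α₂*l‖ < ‖β‖/2 := by
      have h1' : ‖l‖*(‖l‖+‖α₂‖) ≤ ‖l‖*(1+‖α₂‖) :=
        mul_le_mul_of_nonneg_left (add_le_add_left hl1 _) (norm_nonneg l)
      have h2' : ‖l‖*(1+‖α₂‖) < c₁*(1+‖α₂‖) := mul_lt_mul_of_pos_right hlc₁ hα₂1
      have h3' : c₁*(1+‖α₂‖) = ‖β‖/2 := by
        rw [hc₁def]; field_simp
      linarith
    have hqnorm : ‖β‖/2 ≤ ‖l^2 - α₂*l + β‖ := by
      have hq' : (l^2 - α₂*l + β) - (l^2 - α₂*l) = β := by ring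
      have : ‖β‖ ≤ ‖l^2 - α₂*l + β‖ + ‖l^2 - α₂*l‖ := by
        calc ‖β‖ = ‖(l^2 - α₂*l + β) - (l^2 - α₂*l)‖ := by rw [hq']
          _ ≤ _ := norm_sub_le _ _
      linarith
    have hq0 : l^2 - α₂*l + β ≠ 0 := by
      intro h; rw [h, norm_zero] at hqnorm; linarith
    -- the cubic is nonvanishing
    have hfac : l^3 + α₁*l = l*(l^2+α₁) := by ring
    have hp0 : l^3 + α₁*l ≠ 0 := by
      rw [hfac, mul_ne_zero_iff]
      refine ⟨hl0, ?_⟩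
      by_cases hα : α₁ = 0
      · rw [hα, add_zero]; exact pow_ne_zero 2 hl0
      · intro h
        have he : l^2 = -α₁ := eq_neg_of_add_eq_zero_left h
        have hn : ‖l‖^2 = ‖α₁‖ := by rw [← norm_pow, he, norm_neg]
        have hc₃' : c₃ = ‖α₁‖ := by rw [hc₃def, if_neg hα]
        rw [hc₃'] at hlc₃
        nlinarith [norm_nonneg l]
    -- bounds on μ
    have hpnorm : ‖l^3 + α₁*l‖ ≤ ‖l‖*(1+‖α₁‖) := by
      rw [hfac, norm_mul]
      refine mul_le_mul_of_nonneg_left ?_ (norm_nonneg l)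
      calc ‖l^2 + α₁‖ ≤ ‖l^2‖ + ‖α₁‖ := norm_add_le _ _
        _ ≤ 1 + ‖α₁‖ := by
            have : ‖l^2‖ ≤ 1 := by
              rw [norm_pow]
              exact pow_le_one₀ (norm_nonneg l) hl1
            linarith
    have hμ0 : (l^3 + α₁*l)/(l^2 - α₂*l + β) ≠ 0 := div_ne_zero hp0 hq0
    have hμnorm : ‖(l^3 + α₁*l)/(l^2 - α₂*l + β)‖ < ε₃ := by
      set m : ℝ := ‖(l^3 + α₁*l)/(l^2 - α₂*l + β)‖ with hm
      have hmq : m * ‖l^2 - α₂*l + β‖ = ‖l^3 + α₁*l‖ := by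
        rw [hm, ← norm_mul, div_mul_cancel₀ _ hq0]
      have h3' : c₂*(1+‖α₁‖) = ε₃*‖β‖/2 := by
        rw [hc₂def]; field_simp
      have hm0 : 0 ≤ m := norm_nonneg _
      nlinarith [mul_le_mul_of_nonneg_left hqnorm hm0]
    have hus : IsUnit (((l^3 + α₁*l)/(l^2 - α₂*l + β)) • (1:A) - (x₁ + x₂ + x₃)) :=
      hgs _ hμ0 hμnorm
    -- the right-hand side is a unit
    have hqμ : (l^2 - α₂*l + β) * ((l^3 + α₁*l)/(l^2 - α₂*l + β)) = l^3 + α₁*l :=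
      mul_div_cancel₀ _ hq0
    have hqu : IsUnit ((l^2 - α₂*l + β) • (1:A)) := by
      rw [← Algebra.algebraMap_eq_smul_one]
      exact (isUnit_iff_ne_zero.mpr hq0).map (algebraMap ℂ A)
    have hrhs : IsUnit ((l^3 + α₁*l) • (1:A) - (l^2 - α₂*l + β) • (x₁ + x₂ + x₃)) := by
      have he : (l^3 + α₁*l) • (1:A) - (l^2 - α₂*l + β) • (x₁ + x₂ + x₃)
          = ((l^2 - α₂*l + β) • (1:A))
            * ((((l^3 + α₁*l)/(l^2 - α₂*l + β)) • (1:A)) - (x₁ + x₂ + x₃)) := by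
        rw [smul_mul_assoc, one_mul, smul_sub, smul_smul, hqμ]
      rw [he]
      exact hqu.mul hus
    have hid := cubic_identity h1 h2 l
    have hidU : IsUnit ((l • (1:A) - x₁) * ((l • (1:A) - x₂) * (l • (1:A) - x₃))) := by
      rw [hid]
      exact hrhs
    exact isUnit_of_isUnit_mul_left hu2 (isUnit_of_isUnit_mul_left hu1 hidU)
  obtain ⟨b, hb1, hb2, hb3⟩ := hgap.gd hε'pos
  exact ⟨b, hb1, hb2, hb3⟩
end

section
/- Let p, q be idempotents in a complex unital Banach algebra A, m ∈ ℕ with m ≥ 1, and γ₁, λ₁, …, λ_m ∈ ℂ with λ₁γ₁ ≠ 0. Then λ₁p + γ₁q − λ₁pq + λ₂(pqp − (pq)²) + ⋯ + λ_m((pq)^{m−1}p − (pq)^m) is generalized Drazin invertible if and only if λ₁·1 − λ₁pq + λ₂(pqp − (pq)²) + ⋯ + λ_m((pq)^{m−1}p − (pq)^m) is generalized Drazin invertible. -/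
open Filter Topology MulOpposite

section Aux

lemma flip_eq {R : Type*} [Ring R] (a x : R) (h : a * x = x * a) :
    (1 - x * a) * a = a * (1 - a * x) := by
  rw [sub_mul, one_mul, mul_sub, mul_one]
  congr 1
  rw [← h, mul_assoc, ← h]


variable {A : Type*} [NormedRing A] [NormedAlgebra ℂ A] [CompleteSpace A]

lemma ev_norm_pow {x : A} (hx : spectralRadius ℂ x = 0) {δ : ℝ} (hδ : 0 < δ) :
    ∀ᶠ n : ℕ in atTop, ‖x ^ n‖ ≤ δ ^ n := by
  have h := spectrum.pow_norm_pow_one_div_tendsto_nhds_spectralRadius x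
  rw [hx] at h
  have h2 : ∀ᶠ n : ℕ in atTop, ENNReal.ofReal (‖x ^ n‖ ^ (1 / (n:ℝ))) < ENNReal.ofReal δ :=
    h.eventually_lt_const (by simp [ENNReal.ofReal_pos, hδ])
  filter_upwards [h2, eventually_ge_atTop 1] with n hn hn1
  have hb : (0:ℝ) ≤ ‖x ^ n‖ := norm_nonneg _
  have hlt : ‖x ^ n‖ ^ (1 / (n:ℝ)) < δ := (ENNReal.ofReal_lt_ofReal_iff hδ).mp hn
  have hn0 : (n:ℝ) ≠ 0 := by positivity
  calc ‖x ^ n‖ = (‖x ^ n‖ ^ (1 / (n:ℝ))) ^ n := by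
        rw [← Real.rpow_natCast (‖x ^ n‖ ^ (1 / (n:ℝ))) n, ← Real.rpow_mul hb,
          one_div, inv_mul_cancel₀ hn0, Real.rpow_one]
    _ ≤ δ ^ n := by
        apply pow_le_pow_left₀ (Real.rpow_nonneg hb _) hlt.le

lemma quasi_of_forall {y : A} (h : ∀ ε : ℝ, 0 < ε → ∀ᶠ n : ℕ in atTop, ‖y ^ n‖ ≤ ε ^ n) :
    spectralRadius ℂ y = 0 := by
  have hg := spectrum.pow_norm_pow_one_div_tendsto_nhds_spectralRadius y
  refine le_antisymm ?_ zero_le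
  have key : ∀ ε : ℝ, 0 < ε → spectralRadius ℂ y ≤ ENNReal.ofReal ε := by
    intro ε hε
    refine le_of_tendsto hg ?_
    filter_upwards [h ε hε, eventually_ge_atTop 1] with n hn hn1
    refine ENNReal.ofReal_le_ofReal ?_
    have hn0 : (n:ℝ) ≠ 0 := by positivity
    calc ‖y ^ n‖ ^ (1 / (n:ℝ)) ≤ (ε ^ n) ^ (1 / (n:ℝ)) :=
          Real.rpow_le_rpow (norm_nonneg _) hn (by positivity)
      _ = ε := by
          rw [← Real.rpow_natCast ε n, ← Real.rpow_mul hε.le, mul_one_div,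
            div_self hn0, Real.rpow_one]
  have ht : Tendsto (fun n : ℕ => ENNReal.ofReal (1 / (n + 1))) atTop (𝓝 0) := by
    have : Tendsto (fun n : ℕ => (1 : ℝ) / (n + 1)) atTop (𝓝 0) :=
      tendsto_one_div_add_atTop_nhds_zero_nat
    simpa [Function.comp_def] using (ENNReal.continuous_ofReal.tendsto 0).comp this
  refine ge_of_tendsto ht ?_
  filter_upwards with n
  exact key _ (by positivity)

lemma quasi_dominated {x y : A} (hx : spectralRadius ℂ x = 0) (K L : ℝ) (hK : 0 ≤ K) (hL : 0 ≤ L)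
    (h : ∀ n : ℕ, ‖y ^ (n + 1)‖ ≤ K * L ^ (n + 1) * ‖x ^ n‖) : spectralRadius ℂ y = 0 := by
  apply quasi_of_forall
  intro ε hε
  set K' := max K 1 with hK'def
  set L' := max L 1 with hL'def
  have hK1 : (1:ℝ) ≤ K' := le_max_right _ _
  have hL1 : (1:ℝ) ≤ L' := le_max_right _ _
  have hK0 : (0:ℝ) < K' := lt_of_lt_of_le one_pos hK1
  have hL0 : (0:ℝ) < L' := lt_of_lt_of_le one_pos hL1
  have hb : ∀ n : ℕ, ‖y ^ (n + 1)‖ ≤ K' * L' ^ (n + 1) * ‖x ^ n‖ := by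
    intro n
    refine (h n).trans ?_
    have h2 : L ^ (n+1) ≤ L' ^ (n+1) := pow_le_pow_left₀ hL (le_max_left _ _) _
    have h3 : K ≤ K' := le_max_left _ _
    have := norm_nonneg (x ^ n)
    have h4 : (0:ℝ) ≤ L ^ (n+1) := pow_nonneg hL _
    nlinarith [mul_le_mul h3 h2 h4 hK0.le]
  set δ := ε / (2 * L') with hδdef
  have hδ : 0 < δ := by positivity
  obtain ⟨N1, hN1⟩ := eventually_atTop.mp (ev_norm_pow hx hδ)
  obtain ⟨N2, hN2⟩ : ∃ N2 : ℕ, K' * L' / ε ≤ 2 ^ N2 := by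
    obtain ⟨N2, hN2⟩ := pow_unbounded_of_one_lt (K' * L' / ε) one_lt_two
    exact ⟨N2, hN2.le⟩
  refine eventually_atTop.mpr ⟨N1 + N2 + 1, ?_⟩
  intro m hm
  obtain ⟨n, rfl⟩ : ∃ n, m = n + 1 := ⟨m - 1, by omega⟩
  have hnN1 : N1 ≤ n := by omega
  have hnN2 : N2 ≤ n := by omega
  have hxb : ‖x ^ n‖ ≤ δ ^ n := hN1 n hnN1
  calc ‖y ^ (n+1)‖ ≤ K' * L' ^ (n + 1) * ‖x ^ n‖ := hb n
    _ ≤ K' * L' ^ (n + 1) * δ ^ n := by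
        exact mul_le_mul_of_nonneg_left hxb (by positivity)
    _ = K' * L' * (L' * δ) ^ n := by ring
    _ = K' * L' * (ε / 2) ^ n := by
        congr 2
        rw [hδdef, mul_div_assoc', mul_comm 2 L', ← div_div, mul_div_cancel_left₀ _ hL0.ne']
    _ ≤ ε ^ (n + 1) := by
        have h2n : K' * L' / ε ≤ 2 ^ n := le_trans hN2 (pow_le_pow_right₀ one_le_two hnN2)
        have hKL : K' * L' ≤ ε * 2 ^ n := by
          rw [div_le_iff₀ hε] at h2n; nlinarith
        have h2np : (0:ℝ) < 2 ^ n := by positivity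
        have hεn : (0:ℝ) ≤ ε ^ n := by positivity
        calc K' * L' * (ε / 2) ^ n = K' * L' * ε ^ n / 2 ^ n := by
              rw [div_pow]; ring
          _ ≤ ε * 2 ^ n * ε ^ n / 2 ^ n := by
              gcongr ?_ / _
              exact mul_le_mul_of_nonneg_right hKL hεn
          _ = ε ^ (n + 1) := by
              field_simp
              ring


lemma radius_mul_comm (a b : A) : spectralRadius ℂ (a * b) = spectralRadius ℂ (b * a) := by
  have key : ∀ u v : A, spectralRadius ℂ (u * v) ≤ spectralRadius ℂ (v * u) := by
    intro u v
    refine iSup₂_le fun z hz => ?_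
    by_cases hz0 : z = 0
    · simp [hz0]
    · have hz' : z ∈ spectrum ℂ (v * u) := by
        have : z ∈ spectrum ℂ (u * v) \ {0} := ⟨hz, hz0⟩
        rw [spectrum.nonzero_mul_comm] at this
        exact this.1
      exact le_iSup₂ (f := fun k (_ : k ∈ spectrum ℂ (v * u)) => (‖k‖₊ : ENNReal)) z hz'
  exact le_antisymm (key a b) (key b a)

lemma isUnit_smul_one_sub {n : A} (hn : spectralRadius ℂ n = 0) {α : ℂ} (hα : α ≠ 0) :
    IsUnit (α • (1 : A) - n) := by
  have hz : α ∉ spectrum ℂ n := by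
    intro hmem
    have h1 : (‖α‖₊ : ENNReal) ≤ spectralRadius ℂ n :=
      le_iSup₂ (f := fun k (_ : k ∈ spectrum ℂ n) => (‖k‖₊ : ENNReal)) α hmem
    rw [hn] at h1
    simp only [nonpos_iff_eq_zero, ENNReal.coe_eq_zero, nnnorm_eq_zero] at h1
    exact hα h1
  have := spectrum.notMem_iff.mp hz
  rwa [Algebra.algebraMap_eq_smul_one] at this

lemma spectrum_op (a : A) : spectrum ℂ (op a) = spectrum ℂ a := by
  ext z
  simp only [spectrum.mem_iff, not_iff_not]
  rw [show algebraMap ℂ Aᵐᵒᵖ z - op a = op (algebraMap ℂ A z - a) from rfl, isUnit_op]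

lemma radius_op (a : A) : spectralRadius ℂ (op a) = spectralRadius ℂ a := by
  unfold spectralRadius
  rw [spectrum_op]

lemma gdrazin_mul_comm {u v : A} (h : GDrazinInvertible (u * v)) : GDrazinInvertible (v * u) := by
  obtain ⟨C, h1, h2, h3⟩ := h
  set s := u * v with hs
  -- h1 : s * C = C * s, h2 : C * s * C = C, h3 : ρ (s * (1 - s * C)) = 0
  have hcom : Commute s C := h1
  have glue : ∀ P Q : A, (v * P * u) * (v * Q * u) = v * (P * (s * Q)) * u := by
    intro P Q; simp only [hs, mul_assoc]
  have hCC : Commute s (C * C) := hcom.mul_right hcom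
  have hswap : s * (C * C) = C * (s * C) := by rw [← mul_assoc, h1, mul_assoc, h1]
  have hred : ∀ X : A, C * (s * (C * X)) = C * X := by
    intro X; rw [← mul_assoc, ← mul_assoc, h2]
  have hCsC : C * (s * C) = C := by rw [← mul_assoc, h2]
  refine ⟨v * (C * C) * u, ?_, ?_, ?_⟩
  · rw [show v * u = v * 1 * u by rw [mul_one], glue, glue]
    rw [show (1:A) * (s * (C * C)) = s * (C * C) from one_mul _,
      show (C * C) * (s * (1:A)) = C * C * s from by rw [mul_one], hCC.eq]
  · rw [show v * u = v * 1 * u by rw [mul_one], glue, glue]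
    have key : C * C * (s * 1) * (s * (C * C)) = C * C := by
      calc C * C * (s * 1) * (s * (C * C)) = C * (C * (s * (s * (C * C)))) := by
            simp only [one_mul, mul_one, mul_assoc]
        _ = C * (C * (s * (C * (s * C)))) := by rw [hswap]
        _ = C * (C * (s * C)) := by rw [hred]
        _ = C * C := by rw [hCsC]
    rw [key]
  · -- quasinilpotent part
    set m₁ := 1 - s * C with hm₁
    set t := 1 + s * C with ht'
    set x := s * m₁ with hx
    have hx3 : spectralRadius ℂ x = 0 := h3
    have hsc : Commute s (s * C) := (Commute.refl s).mul_right hcom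
    have hc1 : Commute s m₁ := (Commute.one_right s).sub_right hsc
    have hst : Commute s t := (Commute.one_right s).add_right hsc
    have hm₁t : Commute m₁ t :=
      ((Commute.one_left t).sub_left (((Commute.one_right (s*C)).add_right (Commute.refl (s*C)))))
    set y := (v * u) * (1 - (v * u) * (v * (C * C) * u)) with hy'
    have hy : y = v * (m₁ * t) * u := by
      have e1 : (v * u) * (v * (C * C) * u) = v * (s * (C * C)) * u := by
        rw [show v * u = v * 1 * u by rw [mul_one], glue, one_mul]
      have e2 : (v * u) * (v * (s * (C * C)) * u) = v * (s * (s * (C * C))) * u := by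
        rw [show v * u = v * 1 * u by rw [mul_one], glue, one_mul]
      have e3 : m₁ * t = 1 - s * (s * (C * C)) := by
        have : m₁ * t = 1 - (s * C) * (s * C) := by rw [hm₁, ht']; noncomm_ring
        rw [this, mul_assoc s C (s * C), hswap]
      rw [hy', mul_sub, mul_one, e1, e2, e3]
      noncomm_ring
    have hpow : ∀ n : ℕ, y ^ (n + 1) = v * (x ^ n * (m₁ * t ^ (n + 1))) * u := by
      intro n
      induction n with
      | zero => simpa [pow_one] using hy
      | succ n ih =>
        have key2 : (x ^ n * (m₁ * t ^ (n + 1))) * (s * (m₁ * t))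
            = x ^ (n + 1) * (m₁ * t ^ (n + 2)) := by
          -- commutative rearrangement in the subring generated by {s, C}
          calc (x ^ n * (m₁ * t ^ (n + 1))) * (s * (m₁ * t))
              = x ^ n * (m₁ * ((t ^ (n + 1) * s) * (m₁ * t))) := by
                simp only [mul_assoc]
            _ = x ^ n * (m₁ * ((s * t ^ (n + 1)) * (m₁ * t))) := by
                rw [(hst.pow_right (n + 1)).eq]
            _ = x ^ n * ((m₁ * s) * (t ^ (n + 1) * (m₁ * t))) := by
                simp only [mul_assoc]
            _ = x ^ n * (x * (t ^ (n + 1) * (m₁ * t))) := by rw [← hc1.eq, ← hx]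
            _ = x ^ (n + 1) * ((t ^ (n + 1) * m₁) * t) := by
                rw [pow_succ x n]; simp only [mul_assoc]
            _ = x ^ (n + 1) * ((m₁ * t ^ (n + 1)) * t) := by
                rw [(hm₁t.pow_right (n + 1)).eq]
            _ = x ^ (n + 1) * (m₁ * t ^ (n + 2)) := by
                rw [mul_assoc, ← pow_succ]
        calc y ^ (n + 2) = y ^ (n + 1) * y := by rw [pow_succ]
          _ = (v * (x ^ n * (m₁ * t ^ (n + 1))) * u) * (v * (m₁ * t) * u) := by rw [ih, hy]
          _ = v * ((x ^ n * (m₁ * t ^ (n + 1))) * (s * (m₁ * t))) * u := glue _ _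
          _ = v * (x ^ (n + 1) * (m₁ * t ^ (n + 2))) * u := by rw [key2]
    show spectralRadius ℂ y = 0
    refine quasi_dominated hx3 (‖v‖ * ‖m₁‖ * ‖u‖) ‖t‖ (by positivity) (norm_nonneg _) ?_
    intro n
    rw [hpow n]
    calc ‖v * (x ^ n * (m₁ * t ^ (n + 1))) * u‖
        ≤ ‖v * (x ^ n * (m₁ * t ^ (n + 1)))‖ * ‖u‖ := norm_mul_le _ _
      _ ≤ ‖v‖ * ‖x ^ n * (m₁ * t ^ (n + 1))‖ * ‖u‖ := by
          exact mul_le_mul_of_nonneg_right (norm_mul_le _ _) (norm_nonneg _)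
      _ ≤ ‖v‖ * (‖x ^ n‖ * (‖m₁‖ * ‖t ^ (n + 1)‖)) * ‖u‖ := by
          refine mul_le_mul_of_nonneg_right (mul_le_mul_of_nonneg_left ?_ (norm_nonneg _)) (norm_nonneg _)
          exact (norm_mul_le _ _).trans (mul_le_mul_of_nonneg_left (norm_mul_le _ _) (norm_nonneg _))
      _ ≤ ‖v‖ * (‖x ^ n‖ * (‖m₁‖ * ‖t‖ ^ (n + 1))) * ‖u‖ := by
          gcongr
          exact norm_pow_le' t (Nat.succ_pos n)
      _ = ‖v‖ * ‖m₁‖ * ‖u‖ * ‖t‖ ^ (n + 1) * ‖x ^ n‖ := by ring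

lemma Ye_eq {M Y e : A} {α : ℂ} (hα : α ≠ 0) (hMe : M * e = α • e)
    (h1 : M * Y = Y * M) (h2 : Y * M * Y = Y) (h3 : spectralRadius ℂ (M * (1 - M * Y)) = 0) :
    Y * e = α⁻¹ • e := by
  set q := M * (1 - M * Y) with hq
  set ξ := e - M * (Y * e) with hξ
  have hMY2 : (M * Y) * (M * Y) = M * Y := by
    calc (M * Y) * (M * Y) = M * (Y * M * Y) := by simp only [mul_assoc]
      _ = M * Y := by rw [h2]
  have cYe : M * (Y * e) = α • (Y * e) := by
    rw [← mul_assoc, h1, mul_assoc, hMe, mul_smul_comm]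
  have hqξ : q * ξ = α • ξ := by
    have e1 : (1 - M * Y) * ξ = ξ := by
      rw [hξ, sub_mul, one_mul, mul_sub]
      rw [show M * Y * (M * (Y * e)) = ((M * Y) * (M * Y)) * e by simp only [mul_assoc],
        hMY2, mul_assoc]
      abel
    have e2 : M * ξ = α • ξ := by
      rw [hξ]
      conv_lhs => rw [mul_sub, hMe, cYe, mul_smul_comm]
      rw [← smul_sub]
    calc q * ξ = M * ((1 - M * Y) * ξ) := by rw [hq, mul_assoc]
      _ = M * ξ := by rw [e1]
      _ = α • ξ := e2
  have hqn : ∀ n : ℕ, q ^ n * ξ = α ^ n • ξ := by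
    intro n
    induction n with
    | zero => simp
    | succ n ih =>
      calc q ^ (n+1) * ξ = q ^ n * (q * ξ) := by rw [pow_succ, mul_assoc]
        _ = α • (q ^ n * ξ) := by rw [hqξ, mul_smul_comm]
        _ = α ^ (n+1) • ξ := by rw [ih, smul_smul, pow_succ, mul_comm]
  have hξ0 : ξ = 0 := by
    have hδ : (0:ℝ) < ‖α‖ / 2 := by
      have : 0 < ‖α‖ := norm_pos_iff.mpr hα
      linarith
    obtain ⟨n, hn1, hnb⟩ := ((ev_norm_pow h3 hδ).and (eventually_ge_atTop 1)).exists
    have hb : ‖α‖ ^ n * ‖ξ‖ ≤ (‖α‖ / 2) ^ n * ‖ξ‖ := by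
      calc ‖α‖ ^ n * ‖ξ‖ = ‖α ^ n • ξ‖ := by
            rw [norm_smul, norm_pow]
        _ = ‖q ^ n * ξ‖ := by rw [← hqn]
        _ ≤ ‖q ^ n‖ * ‖ξ‖ := norm_mul_le _ _
        _ ≤ (‖α‖ / 2) ^ n * ‖ξ‖ := mul_le_mul_of_nonneg_right hn1 (norm_nonneg _)
    have hα0 : (0:ℝ) < ‖α‖ := norm_pos_iff.mpr hα
    have h2n : (‖α‖ / 2) ^ n < ‖α‖ ^ n := by
      apply pow_lt_pow_left₀ ?_ hδ.le ?_
      · linarith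
      · omega
    have hn0 : ‖ξ‖ = 0 := by nlinarith [norm_nonneg ξ]
    exact norm_eq_zero.mp hn0
  have hMYe : M * (Y * e) = e := by
    have h0 : e - M * (Y * e) = 0 := hξ0
    exact (sub_eq_zero.mp h0).symm
  have key : α • (Y * e) = e := by
    calc α • (Y * e) = Y * (α • e) := by rw [mul_smul_comm]
      _ = Y * (M * e) := by rw [hMe]
      _ = (Y * M) * e := by rw [mul_assoc]
      _ = (M * Y) * e := by rw [h1]
      _ = e := by rw [mul_assoc, hMYe]
  calc Y * e = α⁻¹ • (α • (Y * e)) := by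
        rw [smul_smul, inv_mul_cancel₀ hα, one_smul]
    _ = α⁻¹ • e := by rw [key]

lemma tri_fwd {e w : A} {α : ℂ} (he : e * e = e) (hα : α ≠ 0) (hwe : w * e = 0)
    (h : GDrazinInvertible (α • e + w)) : GDrazinInvertible w := by
  obtain ⟨Y, h1, h2, h3⟩ := h
  set M := α • e + w with hM
  have hMe : M * e = α • e := by
    rw [hM, add_mul, smul_mul_assoc, he, hwe, add_zero]
  have hYe : Y * e = α⁻¹ • e := Ye_eq hα hMe h1 h2 h3
  have hMYe : (M * Y) * e = e := by
    rw [mul_assoc, hYe, mul_smul_comm, hMe, smul_smul, inv_mul_cancel₀ hα, one_smul]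
  set f := (1 : A) - e with hf
  have hfe : f * e = 0 := by rw [hf, sub_mul, one_mul, he, sub_self]
  have hfMf : (f * M) * f = f * M := by
    have h4 : (f * M) * e = 0 := by
      rw [mul_assoc, hMe, mul_smul_comm, hfe, smul_zero]
    rw [hf, mul_sub, mul_one, h4, sub_zero]
  have hfYf : (f * Y) * f = f * Y := by
    have h4 : (f * Y) * e = 0 := by
      rw [mul_assoc, hYe, mul_smul_comm, hfe, smul_zero]
    rw [hf, mul_sub, mul_one, h4, sub_zero]
  have hMYf : (M * Y) * f = M * Y - e := by
    rw [hf, mul_sub, mul_one, hMYe]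
  have hw : w = M * f := by
    rw [hM, hf, mul_sub, mul_one, add_mul, smul_mul_assoc, he, hwe, add_zero]
    abel
  rw [hw]
  apply gdrazin_mul_comm
  -- goal: GDrazinInvertible (f * M)
  have hbZ : (f * M) * (f * Y) = f * (M * Y) := by
    calc (f * M) * (f * Y) = ((f * M) * f) * Y := by rw [← mul_assoc]
      _ = (f * M) * Y := by rw [hfMf]
      _ = f * (M * Y) := by rw [mul_assoc]
  have hZb : (f * Y) * (f * M) = f * (M * Y) := by
    calc (f * Y) * (f * M) = ((f * Y) * f) * M := by rw [← mul_assoc]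
      _ = (f * Y) * M := by rw [hfYf]
      _ = f * (Y * M) := by rw [mul_assoc]
      _ = f * (M * Y) := by rw [h1]
  refine ⟨f * Y, ?_, ?_, ?_⟩
  · rw [hbZ, hZb]
  · rw [hZb]
    calc (f * (M * Y)) * (f * Y) = f * (((M * Y) * f) * Y) := by simp only [mul_assoc]
      _ = f * ((M * Y - e) * Y) := by rw [hMYf]
      _ = f * ((M * Y) * Y) - f * (e * Y) := by noncomm_ring
      _ = f * ((M * Y) * Y) := by
          rw [show f * (e * Y) = (f * e) * Y from (mul_assoc f e Y).symm, hfe, zero_mul,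
            sub_zero]
      _ = f * (Y * M * Y) := by rw [h1]
      _ = f * Y := by rw [h2]
  · have hqb : (f * M) * (1 - (f * M) * (f * Y)) = f * (M * (1 - M * Y)) := by
      rw [hbZ]
      calc (f * M) * (1 - f * (M * Y))
          = f * M - ((f * M) * f) * (M * Y) := by
            rw [mul_sub, mul_one]; simp only [mul_assoc]
        _ = f * M - (f * M) * (M * Y) := by rw [hfMf]
        _ = f * (M * (1 - M * Y)) := by
            rw [mul_sub, mul_one]; simp only [mul_assoc, mul_sub]
    rw [hqb, radius_mul_comm]
    have hqe : (M * (1 - M * Y)) * e = 0 := by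
      calc (M * (1 - M * Y)) * e = M * e - M * ((M * Y) * e) := by
            rw [mul_sub, mul_one, sub_mul]; simp only [mul_assoc]
        _ = 0 := by rw [hMYe, hMe, sub_self]
    have hqf : (M * (1 - M * Y)) * f = M * (1 - M * Y) := by
      rw [hf, mul_sub, mul_one, hqe, sub_zero]
    rw [hqf]
    exact h3

lemma quasi_add {n c' : A} (hn : spectralRadius ℂ n = 0) (hcc : c' * c' = 0)
    (hnc : n * c' = 0) : spectralRadius ℂ (n + c') = 0 := by
  have haux : ∀ k : ℕ, n ^ (k + 1) * c' = 0 := by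
    intro k
    rw [pow_succ, mul_assoc, hnc, mul_zero]
  have hpow : ∀ k : ℕ, (n + c') ^ (k + 1) = n ^ (k + 1) + c' * n ^ k := by
    intro k
    induction k with
    | zero => simp [pow_one]
    | succ k ih =>
      calc (n + c') ^ (k + 2) = (n + c') ^ (k + 1) * (n + c') := by rw [pow_succ]
        _ = (n ^ (k + 1) + c' * n ^ k) * (n + c') := by rw [ih]
        _ = (n ^ (k + 1) * n + n ^ (k + 1) * c') + ((c' * n ^ k) * n + (c' * n ^ k) * c') := by
            rw [add_mul, mul_add, mul_add]
        _ = n ^ (k + 2) + c' * n ^ (k + 1) + (c' * n ^ k) * c' := by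
            rw [haux k, add_zero, ← pow_succ, mul_assoc, ← pow_succ]
            abel
        _ = n ^ (k + 2) + c' * n ^ (k + 1) := by
            rcases k with _ | k
            · simp [hcc]
            · rw [mul_assoc, haux k, mul_zero, add_zero]
  refine quasi_dominated hn (‖n‖ + ‖c'‖) 1 (by positivity) zero_le_one ?_
  intro k
  rw [hpow k, one_pow, mul_one]
  calc ‖n ^ (k + 1) + c' * n ^ k‖ ≤ ‖n ^ (k + 1)‖ + ‖c' * n ^ k‖ := norm_add_le _ _
    _ ≤ ‖n‖ * ‖n ^ k‖ + ‖c'‖ * ‖n ^ k‖ := by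
        gcongr
        · rw [pow_succ']; exact norm_mul_le _ _
        · exact norm_mul_le _ _
    _ = (‖n‖ + ‖c'‖) * ‖n ^ k‖ := by ring

lemma tri_construct {e c b Z : A} {α : ℂ} (hα : α ≠ 0)
    (hee : e * e = e)
    (hec : e * c = c) (hce : c * e = 0) (hcc : c * c = 0)
    (heb : e * b = 0) (hbe : b * e = 0) (hbc : b * c = 0)
    (heZ : e * Z = 0) (hZe : Z * e = 0) (hZc : Z * c = 0)
    (g1 : b * Z = Z * b) (g2 : Z * b * Z = Z)
    (g3 : spectralRadius ℂ (b * (1 - b * Z)) = 0) :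
    GDrazinInvertible (α • e + c + b) := by
  have hα' : α⁻¹ * α = 1 := inv_mul_cancel₀ hα
  have hα'' : α * α⁻¹ = 1 := mul_inv_cancel₀ hα
  obtain ⟨τ, hτ⟩ : ∃ x : A, x = b * Z := ⟨_, rfl⟩
  obtain ⟨n, hn⟩ : ∃ x : A, x = b - b * τ := ⟨_, rfl⟩
  have hZb : Z * b = τ := by rw [hτ, g1]
  have hττ : τ * τ = τ := by
    rw [hτ]
    calc b * Z * (b * Z) = b * (Z * b * Z) := by simp only [mul_assoc]
      _ = b * Z := by rw [g2]
  have hτb : τ * b = b * τ := by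
    rw [hτ, mul_assoc, ← g1, ← mul_assoc]
  have hτe : τ * e = 0 := by rw [hτ, mul_assoc, hZe, mul_zero]
  have heτ : e * τ = 0 := by rw [hτ, ← mul_assoc, heb, zero_mul]
  have hτc : τ * c = 0 := by rw [hτ, mul_assoc, hZc, mul_zero]
  have hτZ : τ * Z = Z := by rw [hτ, g1, g2]
  have hZτ : Z * τ = Z := by rw [hτ, ← mul_assoc, g2]
  have hnτ : n * τ = 0 := by
    rw [hn, sub_mul, mul_assoc, hττ, sub_self]
  have hτn : τ * n = 0 := by
    rw [hn, mul_sub, hτb, ← mul_assoc, hτb, mul_assoc, hττ, sub_self]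
  have hne : n * e = 0 := by
    rw [hn, sub_mul, hbe, mul_assoc, hτe, mul_zero, sub_self]
  have hen : e * n = 0 := by
    rw [hn, mul_sub, ← mul_assoc, heb, zero_mul, sub_self]
  have hnc : n * c = 0 := by
    rw [hn, sub_mul, hbc, mul_assoc, hτc, mul_zero, sub_self]
  have hnZ : n * Z = 0 := by
    rw [hn, sub_mul, mul_assoc, hτZ, sub_self]
  have hZn : Z * n = 0 := by
    rw [hn, mul_sub, hZb, ← mul_assoc, hZb, hττ, sub_self]
  have hbn : b * n = n * b := by
    rw [hn, mul_sub, sub_mul, mul_assoc b τ b, hτb]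
  have hn0 : spectralRadius ℂ n = 0 := by
    have h' : b * (1 - b * Z) = n := by rw [hn, hτ, mul_sub, mul_one]
    rw [← h']
    exact g3
  have hU : IsUnit (α • (1 : A) - n) := isUnit_smul_one_sub hn0 hα
  obtain ⟨V, hVl, hVr⟩ : ∃ V : A, (α • (1 : A) - n) * V = 1 ∧ V * (α • (1 : A) - n) = 1 := by
    refine ⟨((hU.unit⁻¹ : Aˣ) : A), ?_, ?_⟩
    · have h' := hU.unit.mul_inv
      rw [hU.unit_spec] at h'
      exact h'
    · have h' := hU.unit.inv_mul
      rw [hU.unit_spec] at h'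
      exact h'
  have Vleft : ∀ x : A, n * x = 0 → V * x = α⁻¹ • x := by
    intro x hx
    have h1 : (α • (1 : A) - n) * (α⁻¹ • x) = x := by
      rw [sub_mul, smul_mul_assoc, one_mul, mul_smul_comm, hx, smul_zero, sub_zero,
        smul_smul, hα'', one_smul]
    calc V * x = V * ((α • (1 : A) - n) * (α⁻¹ • x)) := by rw [h1]
      _ = (V * (α • (1 : A) - n)) * (α⁻¹ • x) := by rw [mul_assoc]
      _ = α⁻¹ • x := by rw [hVr, one_mul]
  have Vright : ∀ x : A, x * n = 0 → x * V = α⁻¹ • x := by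
    intro x hx
    have h1 : (α⁻¹ • x) * (α • (1 : A) - n) = x := by
      rw [mul_sub, smul_mul_assoc, mul_smul_comm, mul_one, smul_smul, hα', one_smul,
        smul_mul_assoc, hx, smul_zero, sub_zero]
    calc x * V = ((α⁻¹ • x) * (α • (1 : A) - n)) * V := by rw [h1]
      _ = (α⁻¹ • x) * ((α • (1 : A) - n) * V) := by rw [mul_assoc]
      _ = α⁻¹ • x := by rw [hVl, mul_one]
  have hVe : V * e = α⁻¹ • e := Vleft e hne
  have hVτ : V * τ = α⁻¹ • τ := Vleft τ hnτ
  have hVZ : V * Z = α⁻¹ • Z := Vleft Z hnZ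
  have hVc : V * c = α⁻¹ • c := by
    calc V * c = V * (e * c) := by rw [hec]
      _ = (V * e) * c := by rw [mul_assoc]
      _ = α⁻¹ • (e * c) := by rw [hVe, smul_mul_assoc]
      _ = α⁻¹ • c := by rw [hec]
  have hVn : V * n = α • V - 1 := by
    have h' := hVr
    rw [mul_sub, mul_smul_comm, mul_one] at h'
    rw [← h']
    abel
  have hVb : V * b = b * V := by
    have hbu : b * (α • (1:A) - n) = (α • (1:A) - n) * b := by
      rw [mul_sub, sub_mul, mul_smul_comm, smul_mul_assoc, mul_one, one_mul, hbn]
    calc V * b = V * (b * ((α • (1:A) - n) * V)) := by rw [hVl, mul_one]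
      _ = V * ((b * (α • (1:A) - n)) * V) := by rw [mul_assoc]
      _ = V * (((α • (1:A) - n) * b) * V) := by rw [hbu]
      _ = (V * (α • (1:A) - n)) * (b * V) := by simp only [mul_assoc]
      _ = b * V := by rw [hVr, one_mul]
  obtain ⟨M, hM⟩ : ∃ x : A, x = α • e + c + b := ⟨_, rfl⟩
  obtain ⟨s, hs⟩ : ∃ x : A, x = c * V - α⁻¹ • (c * τ) := ⟨_, rfl⟩
  obtain ⟨X, hX⟩ : ∃ x : A, x = Z + α⁻¹ • e + α⁻¹ • s - α⁻¹ • (c * Z) := ⟨_, rfl⟩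
  have hMe' : M * e = α • e := by
    rw [hM, add_mul, add_mul, smul_mul_assoc, hee, hce, hbe, add_zero, add_zero]
  have hMZ : M * Z = c * Z + τ := by
    rw [hM, add_mul, add_mul, smul_mul_assoc, heZ, smul_zero, zero_add, ← hτ]
  have heM : e * M = α • e + c := by
    rw [hM, mul_add, mul_add, mul_smul_comm, hee, hec, heb, add_zero]
  have hZM : Z * M = τ := by
    rw [hM, mul_add, mul_add, mul_smul_comm, hZe, smul_zero, zero_add, hZc, zero_add, hZb]
  have hes : e * s = s := by
    rw [hs, mul_sub, mul_smul_comm, ← mul_assoc, hec, ← mul_assoc, hec]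
  have hcs : c * s = 0 := by
    rw [hs, mul_sub, mul_smul_comm, ← mul_assoc, hcc, zero_mul, ← mul_assoc, hcc, zero_mul,
      smul_zero, sub_zero]
  have hbs : b * s = 0 := by
    rw [hs, mul_sub, mul_smul_comm, ← mul_assoc, hbc, zero_mul, ← mul_assoc, hbc, zero_mul,
      smul_zero, sub_zero]
  have hse : s * e = 0 := by
    rw [hs, sub_mul, smul_mul_assoc, mul_assoc, hVe, mul_smul_comm, hce, smul_zero,
      mul_assoc, hτe, mul_zero, smul_zero, sub_zero]
  have hsc : s * c = 0 := by
    rw [hs, sub_mul, smul_mul_assoc, mul_assoc, hVc, mul_smul_comm, hcc, smul_zero,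
      mul_assoc, hτc, mul_zero, smul_zero, sub_zero]
  have hsZ : s * Z = 0 := by
    rw [hs, sub_mul, smul_mul_assoc, mul_assoc, hVZ, mul_smul_comm, mul_assoc, hτZ,
      ← smul_sub, sub_self, smul_zero]
  have hss : s * s = 0 := by
    nth_rewrite 2 [hs]
    rw [mul_sub, mul_smul_comm, ← mul_assoc, hsc, zero_mul, ← mul_assoc, hsc, zero_mul,
      smul_zero, sub_zero]
  have hτs : τ * s = 0 := by
    rw [hs, mul_sub, mul_smul_comm, ← mul_assoc, hτc, zero_mul, ← mul_assoc, hτc, zero_mul,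
      smul_zero, sub_zero]
  have hsb : s * b = α • (c * V) - c := by
    have h2 : V * (b * τ) = α⁻¹ • (b * τ) := by
      calc V * (b * τ) = (V * b) * τ := by rw [mul_assoc]
        _ = (b * V) * τ := by rw [hVb]
        _ = b * (V * τ) := by rw [mul_assoc]
        _ = α⁻¹ • (b * τ) := by rw [hVτ, mul_smul_comm]
    have hkey : V * b - α⁻¹ • (τ * b) = α • V - 1 := by
      calc V * b - α⁻¹ • (τ * b) = V * b - α⁻¹ • (b * τ) := by rw [hτb]
        _ = V * b - V * (b * τ) := by rw [h2]
        _ = V * (b - b * τ) := by rw [mul_sub]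
        _ = V * n := by rw [← hn]
        _ = α • V - 1 := hVn
    calc s * b = (c * V) * b - α⁻¹ • ((c * τ) * b) := by
          rw [hs, sub_mul, smul_mul_assoc]
      _ = c * (V * b) - α⁻¹ • (c * (τ * b)) := by rw [mul_assoc, mul_assoc]
      _ = c * (V * b - α⁻¹ • (τ * b)) := by rw [mul_sub, mul_smul_comm]
      _ = c * (α • V - 1) := by rw [hkey]
      _ = α • (c * V) - c := by rw [mul_sub, mul_smul_comm, mul_one]
  have hMs : M * s = α • s := by
    rw [hM, add_mul, add_mul, smul_mul_assoc, hes, hcs, hbs, add_zero, add_zero]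
  have hsM : s * M = α • (c * V) - c := by
    rw [hM, mul_add, mul_add, mul_smul_comm, hse, smul_zero, zero_add, hsc, zero_add, hsb]
  have hMcZ : M * (c * Z) = α • (c * Z) := by
    rw [hM, add_mul, add_mul, smul_mul_assoc, ← mul_assoc, hec, ← mul_assoc, hcc, zero_mul,
      ← mul_assoc, hbc, zero_mul, add_zero, add_zero]
  have hcZM : (c * Z) * M = c * τ := by
    rw [hM, mul_add, mul_add, mul_smul_comm, mul_assoc, hZe, mul_zero, smul_zero, zero_add,
      mul_assoc, hZc, mul_zero, zero_add, mul_assoc, hZb]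
  have hMX : M * X = e + τ + s := by
    rw [hX, mul_sub, mul_add, mul_add, mul_smul_comm, mul_smul_comm, mul_smul_comm,
      hMZ, hMe', hMs, hMcZ, smul_smul, smul_smul, smul_smul, hα', one_smul, one_smul, one_smul]
    abel
  have hXM : X * M = e + τ + s := by
    rw [hX, sub_mul, add_mul, add_mul, smul_mul_assoc, smul_mul_assoc, smul_mul_assoc,
      hZM, heM, hsM, hcZM, smul_add, smul_sub, smul_smul, smul_smul, hα', one_smul, one_smul]
    rw [hs]
    abel
  rw [← hM]
  refine ⟨X, ?_, ?_, ?_⟩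
  · rw [hMX, hXM]
  · rw [hXM]
    have heX : e * X = α⁻¹ • e + α⁻¹ • s - α⁻¹ • (c * Z) := by
      rw [hX, mul_sub, mul_add, mul_add, heZ, mul_smul_comm, mul_smul_comm, mul_smul_comm,
        hee, hes, ← mul_assoc, hec, zero_add]
    have hτX : τ * X = Z := by
      rw [hX, mul_sub, mul_add, mul_add, hτZ, mul_smul_comm, mul_smul_comm, mul_smul_comm,
        hτe, smul_zero, hτs, smul_zero, ← mul_assoc, hτc, zero_mul, smul_zero, add_zero,
        add_zero, sub_zero]
    have hsX : s * X = 0 := by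
      rw [hX, mul_sub, mul_add, mul_add, hsZ, mul_smul_comm, mul_smul_comm, mul_smul_comm,
        hse, smul_zero, hss, smul_zero, ← mul_assoc, hsc, zero_mul, smul_zero, add_zero,
        add_zero, sub_zero]
    rw [add_mul, add_mul, heX, hτX, hsX, add_zero, hX]
    abel
  · have hMτ : M * τ = c * τ + b * τ := by
      rw [hM, add_mul, add_mul, smul_mul_assoc, heτ, smul_zero, zero_add]
    have hq : M * (1 - M * X) = n + (c - α • (c * V)) := by
      rw [hMX, mul_sub, mul_one, mul_add, mul_add, hMe', hMτ, hMs, hM, hn, hs, smul_sub,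
        smul_smul, hα'', one_smul]
      abel
    rw [hq]
    have hcVc : (c * V) * c = 0 := by
      rw [mul_assoc, hVc, mul_smul_comm, hcc, smul_zero]
    have hcVcV : (c * V) * (c * V) = 0 := by
      rw [← mul_assoc, hcVc, zero_mul]
    have hccV : c * (c * V) = 0 := by rw [← mul_assoc, hcc, zero_mul]
    have hc'c' : (c - α • (c * V)) * (c - α • (c * V)) = 0 := by
      rw [sub_mul, mul_sub, mul_sub, hcc, mul_smul_comm, hccV, smul_zero, smul_mul_assoc,
        hcVc, smul_zero, smul_mul_assoc, mul_smul_comm, hcVcV, smul_zero, smul_zero]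
      abel
    have hnc' : n * (c - α • (c * V)) = 0 := by
      rw [mul_sub, mul_smul_comm, ← mul_assoc, hnc, zero_mul, smul_zero, sub_zero]
    exact quasi_add hn0 hc'c' hnc'

lemma tri_bwd {e w : A} {α : ℂ} (he : e * e = e) (hα : α ≠ 0) (hwe : w * e = 0)
    (h : GDrazinInvertible w) : GDrazinInvertible (α • e + w) := by
  have h1 : GDrazinInvertible (w * (1 - e)) := by
    rw [mul_sub, mul_one, hwe, sub_zero]; exact h
  obtain ⟨Z₀, g1, g2, g3⟩ := gdrazin_mul_comm h1
  obtain ⟨f, hf⟩ : ∃ x : A, x = 1 - e := ⟨_, rfl⟩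
  obtain ⟨c, hc⟩ : ∃ x : A, x = e * w := ⟨_, rfl⟩
  obtain ⟨b, hb⟩ : ∃ x : A, x = f * w := ⟨_, rfl⟩
  have hwf : w * f = w := by rw [hf, mul_sub, mul_one, hwe, sub_zero]
  have hef : e * f = 0 := by rw [hf, mul_sub, mul_one, he, sub_self]
  have hfe : f * e = 0 := by rw [hf, sub_mul, one_mul, he, sub_self]
  have hff : f * f = f := by
    have h' : ((1:A) - e) * (1 - e) = 1 - e - e + e * e := by noncomm_ring
    rw [hf, h', he]
    abel
  have g1' : b * Z₀ = Z₀ * b := by rw [hb, hf]; exact g1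
  have g2' : Z₀ * b * Z₀ = Z₀ := by rw [hb, hf]; exact g2
  have g3' : spectralRadius ℂ (b * (1 - b * Z₀)) = 0 := by rw [hb, hf]; exact g3
  have hfb : f * b = b := by rw [hb, ← mul_assoc, hff]
  have hbf : b * f = b := by rw [hb, mul_assoc, hwf]
  have hfZ₀ : f * Z₀ = Z₀ := by
    have hZeq : Z₀ = b * (Z₀ * Z₀) := by
      calc Z₀ = Z₀ * b * Z₀ := g2'.symm
        _ = (b * Z₀) * Z₀ := by rw [← g1']
        _ = b * (Z₀ * Z₀) := by rw [mul_assoc]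
    calc f * Z₀ = f * (b * (Z₀ * Z₀)) := by rw [← hZeq]
      _ = (f * b) * (Z₀ * Z₀) := by rw [← mul_assoc]
      _ = b * (Z₀ * Z₀) := by rw [hfb]
      _ = Z₀ := hZeq.symm
  obtain ⟨Z, hZdef⟩ : ∃ x : A, x = Z₀ * f := ⟨_, rfl⟩
  have heZ₀ : e * Z₀ = 0 := by
    rw [← hfZ₀, ← mul_assoc, hef, zero_mul]
  have heZ : e * Z = 0 := by rw [hZdef, ← mul_assoc, heZ₀, zero_mul]
  have hZe : Z * e = 0 := by rw [hZdef, mul_assoc, hfe, mul_zero]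
  have hfc : f * c = 0 := by rw [hc, ← mul_assoc, hfe, zero_mul]
  have hZc : Z * c = 0 := by rw [hZdef, mul_assoc, hfc, mul_zero]
  have hbZ1 : b * Z = Z₀ * b := by
    rw [hZdef, ← mul_assoc, g1', mul_assoc, hbf]
  have hZb1 : Z * b = Z₀ * b := by
    rw [hZdef, mul_assoc, hfb]
  have hZb' : b * Z = Z * b := by rw [hbZ1, hZb1]
  have hg2' : Z * b * Z = Z := by
    calc Z * b * Z = (Z₀ * b) * (Z₀ * f) := by rw [hZb1, hZdef]
      _ = (Z₀ * b * Z₀) * f := by simp only [mul_assoc]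
      _ = Z₀ * f := by rw [g2']
      _ = Z := hZdef.symm
  have hg3' : spectralRadius ℂ (b * (1 - b * Z)) = 0 := by
    have hbZeq : b * Z = b * Z₀ := by rw [hbZ1, ← g1']
    rw [hbZeq]
    exact g3'
  have hec' : e * c = c := by rw [hc, ← mul_assoc, he]
  have hce' : c * e = 0 := by rw [hc, mul_assoc, hwe, mul_zero]
  have hcc' : c * c = 0 := by
    rw [hc, mul_assoc, ← mul_assoc w e w, hwe, zero_mul, mul_zero]
  have heb : e * b = 0 := by rw [hb, ← mul_assoc, hef, zero_mul]
  have hbe : b * e = 0 := by rw [hb, mul_assoc, hwe, mul_zero]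
  have hbc : b * c = 0 := by
    rw [hb, hc, mul_assoc, ← mul_assoc w e w, hwe, zero_mul, mul_zero]
  have hsum : α • e + c + b = α • e + w := by
    rw [add_assoc, hc, hb, hf, ← add_mul]
    rw [show e + ((1:A) - e) = 1 from by abel, one_mul]
  rw [← hsum]
  exact tri_construct hα he hec' hce' hcc' heb hbe hbc heZ hZe hZc hZb' hg2' hg3'

lemma gdrazin_op {a : A} (h : GDrazinInvertible a) : GDrazinInvertible (op a) := by
  obtain ⟨x, h1, h2, h3⟩ := h
  refine ⟨op x, ?_, ?_, ?_⟩
  · rw [← op_mul, ← op_mul, h1]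
  · rw [← op_mul, ← op_mul, show x * (a * x) = x * a * x from (mul_assoc x a x).symm, h2]
  · have e1 : op a * (1 - op a * op x) = op ((1 - x * a) * a) := by
      rw [← op_mul, ← op_one (α := A), ← op_sub, ← op_mul]
    rw [e1, radius_op, flip_eq a x h1]
    exact h3
lemma gdrazin_unop {a : A} (h : GDrazinInvertible (op a)) : GDrazinInvertible a := by
  obtain ⟨y, h1, h2, h3⟩ := h
  refine ⟨unop y, ?_, ?_, ?_⟩
  · have := congrArg unop h1
    rw [unop_mul, unop_mul, unop_op] at this
    exact this.symm
  · have := congrArg unop h2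
    rw [unop_mul, unop_mul, unop_op] at this
    rw [← mul_assoc] at this
    exact this
  · have e1 : op a * (1 - op a * y) = op ((1 - unop y * a) * a) := by
      rw [show op a * y = op (unop y * a) from by rw [op_mul, op_unop],
        ← op_one (α := A), ← op_sub, ← op_mul]
    rw [e1, radius_op] at h3
    have h1' : a * unop y = unop y * a := by
      have := congrArg unop h1
      rw [unop_mul, unop_mul, unop_op] at this
      exact this.symm
    rw [flip_eq a (unop y) h1'] at h3
    exact h3

lemma Lright {e w : A} {α : ℂ} (he : e * e = e) (hα : α ≠ 0) (hwe : w * e = 0) :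
    GDrazinInvertible (α • e + w) ↔ GDrazinInvertible w :=
  ⟨tri_fwd he hα hwe, tri_bwd he hα hwe⟩

lemma Lleft {e w : A} {α : ℂ} (he : e * e = e) (hα : α ≠ 0) (hew : e * w = 0) :
    GDrazinInvertible (α • e + w) ↔ GDrazinInvertible w := by
  have hop : GDrazinInvertible (α • e + w) ↔ GDrazinInvertible (op (α • e + w)) :=
    ⟨gdrazin_op, gdrazin_unop⟩
  rw [hop, op_add, op_smul]
  have he' : op e * op e = op e := by rw [← op_mul, he]
  have hwe' : op w * op e = 0 := by rw [← op_mul, hew, op_zero]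
  rw [Lright he' hα hwe']
  exact ⟨gdrazin_unop, gdrazin_op⟩

end Aux

theorem stmt_13 {A : Type*} [NormedRing A] [NormedAlgebra ℂ A] [CompleteSpace A]
    (p q : A) (hp : p * p = p) (hq : q * q = q) (m : ℕ) (hm : 1 ≤ m)
    (lam : ℕ → ℂ) (γ₁ : ℂ) (h : lam 1 * γ₁ ≠ 0) :
    GDrazinInvertible (lam 1 • p + γ₁ • q - lam 1 • (p * q) +
        ∑ i ∈ Finset.Icc 2 m, lam i • ((p * q) ^ (i - 1) * p - (p * q) ^ i)) ↔
      GDrazinInvertible (lam 1 • (1 : A) - lam 1 • (p * q) +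
        ∑ i ∈ Finset.Icc 2 m, lam i • ((p * q) ^ (i - 1) * p - (p * q) ^ i)) := by
  have hl1 : lam 1 ≠ 0 := left_ne_zero_of_mul h
  have hγ : γ₁ ≠ 0 := right_ne_zero_of_mul h
  set S : A := ∑ i ∈ Finset.Icc 2 m, lam i • ((p * q) ^ (i - 1) * p - (p * q) ^ i) with hS
  set w : A := lam 1 • (p - p * q) + S with hw
  -- each summand of S, rewritten
  have hterm : ∀ i ∈ Finset.Icc 2 m,
      lam i • ((p * q) ^ (i - 1) * p - (p * q) ^ i)
        = lam i • ((p * q) ^ (i - 1) * (p - p * q)) := by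
    intro i hi
    have hi2 : 2 ≤ i := (Finset.mem_Icc.mp hi).1
    congr 1
    rw [mul_sub]
    congr 1
    rw [← pow_succ, Nat.sub_add_cancel (by omega)]
  have hkey : ∀ k : ℕ, p * ((p * q) ^ k * (p - p * q)) = (p * q) ^ k * (p - p * q) := by
    intro k
    cases k with
    | zero =>
      rw [pow_zero, one_mul, mul_sub, hp, ← mul_assoc, hp]
    | succ k =>
      rw [pow_succ', mul_assoc, ← mul_assoc p (p * q) _, ← mul_assoc p p q, hp]
  have hpw : (1 - p) * w = 0 := by
    have hterms : ∀ k : ℕ, (1 - p) * ((p * q) ^ k * (p - p * q)) = 0 := by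
      intro k
      rw [sub_mul, one_mul, hkey k, sub_self]
    rw [hw, mul_add, mul_smul_comm]
    have h0 : (1 - p) * (p - p * q) = 0 := by
      have := hterms 0
      rwa [pow_zero, one_mul] at this
    rw [h0, smul_zero, zero_add, hS, Finset.mul_sum]
    refine Finset.sum_eq_zero fun i hi => ?_
    rw [hterm i hi, mul_smul_comm, hterms, smul_zero]
  have hwq : w * q = 0 := by
    have hpq0 : (p - p * q) * q = 0 := by
      rw [sub_mul, mul_assoc, hq, sub_self]
    rw [hw, add_mul, smul_mul_assoc, hpq0, smul_zero, zero_add, hS, Finset.sum_mul]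
    refine Finset.sum_eq_zero fun i hi => ?_
    rw [hterm i hi, smul_mul_assoc, mul_assoc, hpq0, mul_zero, smul_zero]
  have hg : lam 1 • p + γ₁ • q - lam 1 • (p * q) + S = γ₁ • q + w := by
    rw [hw, smul_sub]
    abel
  have hf : lam 1 • (1 : A) - lam 1 • (p * q) + S = lam 1 • (1 - p) + w := by
    rw [hw, smul_sub, smul_sub]
    abel
  rw [hg, hf]
  have hp' : (1 - p) * (1 - p) = (1 : A) - p := by
    have h' : ((1:A) - p) * (1 - p) = 1 - p - p + p * p := by noncomm_ring
    rw [h', hp]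
    abel
  rw [Lright hq hγ hwq, Lleft hp' hl1 hpw]
end

section
/- If x is a Drazin invertible element of a complex unital Banach algebra A with Drazin inverse x^d and Drazin index i(x), then for all λ ∈ ℂ with 0 < |λ| < (spectral radius of x^d)⁻¹, the element λ·1 − x is invertible and (λ − x)⁻¹ = Σ_{n=1}^{i(x)} λ^{−n} x^{n−1}(1 − x·x^d) − Σ_{n=0}^{∞} λⁿ (x^d)^{n+1}. -/
open scoped ENNReal

/-- `b` is a Drazin inverse of `a`. -/
def IsDrazinInverse {A : Type*} [Ring A] (a b : A) : Prop :=
  a * b = b * a ∧ b * a * b = b ∧ ∃ n : ℕ, (a * (1 - a * b)) ^ n = 0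

/-- `b` is the Drazin inverse of `a` with Drazin index `k`, i.e. `k` is the least `n`
with `(a * (1 - a * b)) ^ n = 0`. -/
def IsDrazinInverseIdx {A : Type*} [Ring A] (a b : A) (k : ℕ) : Prop :=
  a * b = b * a ∧ b * a * b = b ∧ (a * (1 - a * b)) ^ k = 0 ∧
    ∀ m : ℕ, (a * (1 - a * b)) ^ m = 0 → k ≤ m

theorem stmt_17 {A : Type*} [NormedRing A] [NormedAlgebra ℂ A] [CompleteSpace A]
    (x b : A) (k : ℕ) (hx : IsDrazinInverseIdx x b k) (lam : ℂ)
    (hlam : 0 < ‖lam‖) (hlam' : (‖lam‖₊ : ℝ≥0∞) < (spectralRadius ℂ b)⁻¹) :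
    IsUnit (lam • (1 : A) - x) ∧
      Ring.inverse (lam • (1 : A) - x) =
        (∑ n ∈ Finset.Icc 1 k, (lam ^ n)⁻¹ • (x ^ (n - 1) * (1 - x * b))) -
          ∑' n : ℕ, lam ^ n • b ^ (n + 1) := by
  obtain ⟨hcomm, hbab, hk0, -⟩ := hx
  have hlam0 : lam ≠ 0 := by simpa using hlam.ne'
  -- trivial case : k = 0 forces the algebra to be trivial
  by_cases hk' : k = 0
  · subst hk'
    have h10 : (0 : A) = 1 := by simpa using hk0.symm
    haveI : Subsingleton A := subsingleton_of_zero_eq_one h10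
    exact ⟨isUnit_of_subsingleton _, Subsingleton.elim _ _⟩
  -- basic algebraic identities, with e := x * b and p := 1 - x * b
  have hcxb : Commute x b := hcomm
  have hbe : b * (x * b) = b := by rw [← mul_assoc]; exact hbab
  have heb : (x * b) * b = b := by
    rw [hcomm, mul_assoc, hbe]
  have hee : (x * b) * (x * b) = x * b := by
    rw [mul_assoc, hbe]
  have hxe : Commute x (x * b) := by
    show x * (x * b) = x * b * x
    rw [mul_assoc, ← hcomm]
  have hxp : Commute x (1 - x * b) := (Commute.one_right x).sub_right hxe
  have hpp : (1 - x * b) * (1 - x * b) = 1 - x * b := by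
    have : (1 - x * b) * (1 - x * b) = 1 - x * b - ((x * b) - (x * b) * (x * b)) := by
      noncomm_ring
    rw [this, hee, sub_self, sub_zero]
  have hbp : b * (1 - x * b) = 0 := by
    rw [mul_sub, mul_one, hbe, sub_self]
  -- powers
  have hxbn : ∀ n : ℕ, x * b ^ (n + 1) = b ^ n * (x * b) := by
    intro n
    have hc : Commute x (b ^ n) := hcxb.pow_right n
    calc x * b ^ (n + 1) = x * (b ^ n * b) := by rw [pow_succ]
      _ = (x * b ^ n) * b := by rw [mul_assoc]
      _ = (b ^ n * x) * b := by rw [hc.eq]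
      _ = b ^ n * (x * b) := by rw [mul_assoc]
  have hbne : ∀ n : ℕ, b ^ (n + 1) * (x * b) = b ^ (n + 1) := by
    intro n
    calc b ^ (n + 1) * (x * b) = b ^ n * (b * (x * b)) := by rw [pow_succ, mul_assoc]
      _ = b ^ (n + 1) := by rw [hbe, pow_succ]
  have hxppow : ∀ n : ℕ, (x * (1 - x * b)) ^ (n + 1) = x ^ (n + 1) * (1 - x * b) := by
    intro n
    induction n with
    | zero => simp
    | succ m ih =>
      calc (x * (1 - x * b)) ^ (m + 2)
          = (x * (1 - x * b)) ^ (m + 1) * (x * (1 - x * b)) := by rw [pow_succ]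
        _ = x ^ (m + 1) * (((1 - x * b) * x) * (1 - x * b)) := by
            rw [ih]; simp [mul_assoc]
        _ = x ^ (m + 1) * ((x * (1 - x * b)) * (1 - x * b)) := by rw [hxp.eq]
        _ = x ^ (m + 1) * (x * ((1 - x * b) * (1 - x * b))) := by simp [mul_assoc]
        _ = x ^ (m + 1) * (x * (1 - x * b)) := by rw [hpp]
        _ = x ^ (m + 2) * (1 - x * b) := by simp [pow_succ, mul_assoc]
  have hkp : x ^ k * (1 - x * b) = 0 := by
    obtain ⟨m, rfl⟩ := Nat.exists_eq_succ_of_ne_zero hk'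
    rw [← hxppow m]
    exact hk0
  -- summability
  have hbig : spectralRadius ℂ b < ((‖lam‖₊ : ℝ≥0∞))⁻¹ :=
    ENNReal.lt_inv_iff_lt_inv.mp hlam'
  obtain ⟨ρ, hρ1, hρ2⟩ := ENNReal.lt_iff_exists_nnreal_btwn.mp hbig
  have hlamnn : ‖lam‖₊ ≠ 0 := by simpa using hlam0
  have hq1 : ‖lam‖₊ * ρ < 1 := by
    rw [← ENNReal.coe_inv hlamnn, ENNReal.coe_lt_coe] at hρ2
    rwa [NNReal.lt_inv_iff_mul_lt hlamnn, mul_comm] at hρ2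
  have hev : ∀ᶠ n : ℕ in Filter.atTop, (‖b ^ n‖₊ : ℝ≥0∞) ^ (1 / (n : ℝ)) < ρ :=
    (spectrum.pow_nnnorm_pow_one_div_tendsto_nhds_spectralRadius b).eventually_lt_const hρ1
  have hevb : ∀ᶠ n : ℕ in Filter.atTop, ‖b ^ n‖₊ ≤ ρ ^ n := by
    filter_upwards [hev, Filter.eventually_ge_atTop 1] with n hn hn1
    have hn0 : (n : ℝ) ≠ 0 := by positivity
    have h1 : ((‖b ^ n‖₊ : ℝ≥0∞) ^ (1 / (n : ℝ))) ^ (n : ℝ) ≤ (ρ : ℝ≥0∞) ^ (n : ℝ) :=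
      ENNReal.rpow_le_rpow hn.le (by positivity)
    rw [← ENNReal.rpow_mul, one_div, inv_mul_cancel₀ hn0, ENNReal.rpow_one] at h1
    have h2 : (‖b ^ n‖₊ : ℝ≥0∞) ≤ (((ρ ^ n : NNReal)) : ℝ≥0∞) := by
      rw [ENNReal.coe_pow, ← ENNReal.rpow_natCast]
      exact h1
    exact_mod_cast h2
  have hcsum : Summable fun n : ℕ => lam ^ n • b ^ n := by
    apply Summable.of_norm_bounded_eventually (g := fun n => ((‖lam‖₊ * ρ : NNReal) : ℝ) ^ n)
      (summable_geometric_of_lt_one (‖lam‖₊ * ρ).coe_nonneg (by exact_mod_cast hq1))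
    rw [Nat.cofinite_eq_atTop]
    filter_upwards [hevb] with n hn
    have hnn : ‖lam ^ n • b ^ n‖₊ ≤ (‖lam‖₊ * ρ) ^ n := by
      rw [nnnorm_smul, nnnorm_pow, mul_pow]
      exact mul_le_mul_right hn _
    calc ‖lam ^ n • b ^ n‖ = ((‖lam ^ n • b ^ n‖₊ : NNReal) : ℝ) := rfl
      _ ≤ (((‖lam‖₊ * ρ) ^ n : NNReal) : ℝ) := by exact_mod_cast hnn
      _ = ((‖lam‖₊ * ρ : NNReal) : ℝ) ^ n := by push_cast; ring
  set f : ℕ → A := fun n => lam ^ n • b ^ (n + 1) with hf_def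
  have hf : Summable f := by
    have := hcsum.mul_right b
    simpa [hf_def, smul_mul_assoc, ← pow_succ] using this
  set g : ℕ → A := fun n => lam ^ n • (b ^ n * (x * b)) with hg_def
  have hg1eq : ∀ n : ℕ, g (n + 1) = lam • (f n * (x * b)) := by
    intro n
    show lam ^ (n + 1) • (b ^ (n + 1) * (x * b)) = lam • ((lam ^ n • b ^ (n + 1)) * (x * b))
    rw [smul_mul_assoc, smul_smul, ← pow_succ']
  have hg1 : Summable fun n => g (n + 1) := by
    simpa only [hg1eq] using (hf.mul_right (x * b)).const_smul lam
  have hg : Summable g := (summable_nat_add_iff 1).mp hg1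
  -- definitions of the two sums
  set T : A := ∑' n : ℕ, f n with hT_def
  set S : A := ∑ n ∈ Finset.Icc 1 k, (lam ^ n)⁻¹ • (x ^ (n - 1) * (1 - x * b)) with hS_def
  -- left multiplication computations
  have hmulT : (lam • (1 : A) - x) * T = -(x * b) := by
    have key : ∀ n : ℕ, (lam • (1 : A) - x) * f n = g (n + 1) - g n := by
      intro n
      have h1 : (lam • (1 : A) - x) * f n
          = lam ^ (n + 1) • b ^ (n + 1) - lam ^ n • (b ^ n * (x * b)) := by
        show (lam • (1 : A) - x) * (lam ^ n • b ^ (n + 1)) = _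
        simp only [sub_mul, smul_mul_assoc, one_mul, mul_smul_comm, smul_smul, hxbn n]
        rw [smul_sub, smul_smul, ← pow_succ]
      rw [h1]
      show _ = lam ^ (n + 1) • (b ^ (n + 1) * (x * b)) - lam ^ n • (b ^ n * (x * b))
      rw [hbne n]
    calc (lam • (1 : A) - x) * T = ∑' n : ℕ, (lam • (1 : A) - x) * f n :=
          (hf.tsum_mul_left _).symm
      _ = ∑' n : ℕ, (g (n + 1) - g n) := by simp only [key]
      _ = (∑' n : ℕ, g (n + 1)) - ∑' n : ℕ, g n := Summable.tsum_sub hg1 hg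
      _ = (∑' n : ℕ, g (n + 1)) - (g 0 + ∑' n : ℕ, g (n + 1)) := by
          rw [← Summable.tsum_eq_zero_add hg]
      _ = -g 0 := by abel
      _ = -(x * b) := by simp [hg_def]
  have hmulS : (lam • (1 : A) - x) * S = 1 - x * b := by
    set G : ℕ → A := fun n => (lam ^ n)⁻¹ • (x ^ n * (1 - x * b)) with hG_def
    have hreindex : S = ∑ i ∈ Finset.range k, (lam ^ (i + 1))⁻¹ • (x ^ i * (1 - x * b)) := by
      rw [hS_def, ← Finset.Ico_add_one_right_eq_Icc, Finset.sum_Ico_eq_sum_range]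
      simp [add_comm 1, mul_comm]
    have key : ∀ i : ℕ, (lam • (1 : A) - x) * ((lam ^ (i + 1))⁻¹ • (x ^ i * (1 - x * b)))
        = G i - G (i + 1) := by
      intro i
      have hinv : (lam ^ (i + 1))⁻¹ * lam = (lam ^ i)⁻¹ := by
        field_simp [pow_succ]
        ring
      have hxx : x * (x ^ i * (1 - x * b)) = x ^ (i + 1) * (1 - x * b) := by
        rw [← mul_assoc, ← pow_succ']
      show _ = (lam ^ i)⁻¹ • (x ^ i * (1 - x * b))
          - (lam ^ (i + 1))⁻¹ • (x ^ (i + 1) * (1 - x * b))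
      simp only [sub_mul, smul_mul_assoc, one_mul, mul_smul_comm, smul_smul, hxx]
      rw [smul_sub, smul_smul, hinv]
    calc (lam • (1 : A) - x) * S
        = ∑ i ∈ Finset.range k, (lam • (1 : A) - x) * ((lam ^ (i + 1))⁻¹ • (x ^ i * (1 - x * b))) := by
          rw [hreindex, Finset.mul_sum]
      _ = ∑ i ∈ Finset.range k, (G i - G (i + 1)) := by simp only [key]
      _ = G 0 - G k := Finset.sum_range_sub' G k
      _ = 1 - x * b := by simp [hG_def, hkp]
  have hleft : (lam • (1 : A) - x) * (S - T) = 1 := by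
    rw [mul_sub, hmulS, hmulT]
    abel
  -- commutation to get the right inverse
  have hxS : Commute x S := by
    rw [hS_def]
    refine Commute.sum_right _ _ _ (fun n _ => ?_)
    exact (((Commute.refl x).pow_right _).mul_right hxp).smul_right _
  have hxT : Commute x T := by
    have key : ∀ n : ℕ, x * f n = f n * x := by
      intro n
      have hc : Commute x (b ^ (n + 1)) := hcxb.pow_right _
      show x * (lam ^ (n + 1 - 1) • b ^ (n + 1)) = (lam ^ (n + 1 - 1) • b ^ (n + 1)) * x
      rw [mul_smul_comm, smul_mul_assoc, hc.eq]
    show x * T = T * x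
    rw [hT_def]
    calc x * ∑' n, f n = ∑' n, x * f n := (hf.tsum_mul_left x).symm
      _ = ∑' n, f n * x := by simp only [key]
      _ = (∑' n, f n) * x := hf.tsum_mul_right x
  have hcom : Commute (lam • (1 : A) - x) (S - T) := by
    have h1 : Commute (lam • (1 : A)) (S - T) :=
      ((Commute.one_left S).sub_right (Commute.one_left T)).smul_left lam
    have h2 : Commute x (S - T) := hxS.sub_right hxT
    exact h1.sub_left h2
  have hright : (S - T) * (lam • (1 : A) - x) = 1 := by
    rw [← hcom.eq, hleft]
  -- conclusion
  refine ⟨⟨⟨lam • (1 : A) - x, S - T, hleft, hright⟩, rfl⟩, ?_⟩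
  have := Ring.inverse_unit (⟨lam • (1 : A) - x, S - T, hleft, hright⟩ : Aˣ)
  simpa [hS_def, hT_def, hf_def] using this
end

section
/- Let x₁, x₂ be elements of a complex unital Banach algebra A with x₁x₂ = 0, and suppose x₁ and x₂ are Drazin invertible with indices i(x₁), i(x₂). Then x₁ + x₂ is Drazin invertible and (x₁+x₂)^d = Σ_{n=1}^{i(x₂)} (1 − x₂x₂^d) x₂^{n−1} (x₁^d)^n + Σ_{n=1}^{i(x₁)} (x₂^d)^n x₁^{n−1} (1 − x₁x₁^d). -/
open scoped ENNReal

section Key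

variable {A : Type*} [Ring A]

private lemma drazin_add_key (a b ad bd : A) (m₁ m₂ : ℕ)
    (hab : a * b = 0)
    (h1c : a * ad = ad * a) (h1i : ad * a * ad = ad)
    (h1n : (a * (1 - a * ad)) ^ (m₁ + 1) = 0)
    (h2c : b * bd = bd * b) (h2i : bd * b * bd = bd)
    (h2n : (b * (1 - b * bd)) ^ (m₂ + 1) = 0) :
    IsDrazinInverse (a + b)
      ((∑ i ∈ Finset.range (m₂ + 1), (1 - b * bd) * b ^ i * ad ^ (i + 1)) +
        ∑ i ∈ Finset.range (m₁ + 1), bd ^ (i + 1) * a ^ i * (1 - a * ad)) := by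
  -- abbreviations
  set u : A := ∑ i ∈ Finset.range (m₂ + 1), (1 - b * bd) * b ^ i * ad ^ (i + 1) with hu
  set v : A := ∑ i ∈ Finset.range (m₁ + 1), bd ^ (i + 1) * a ^ i * (1 - a * ad) with hv
  set S₁ : A := ∑ i ∈ Finset.range m₁, bd ^ (i + 1) * a ^ (i + 1) * (1 - a * ad) with hS₁
  set S₂ : A := ∑ i ∈ Finset.range m₂, (1 - b * bd) * b ^ (i + 1) * ad ^ (i + 1) with hS₂
  set F : A := a * ad + (b * bd) * (1 - a * ad) + S₁ + S₂ with hF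
  -- atomic facts
  have hbd_split : b * (bd * bd) = bd := by rw [← mul_assoc, h2c]; exact h2i
  have had_split : ad * ad * a = ad := by rw [mul_assoc, ← h1c, ← mul_assoc]; exact h1i
  have habd : a * bd = 0 := by rw [← hbd_split, ← mul_assoc, hab, zero_mul]
  have hadb : ad * b = 0 := by rw [← had_split, mul_assoc, hab, mul_zero]
  have hadbd : ad * bd = 0 := by rw [← had_split, mul_assoc, habd, mul_zero]
  have ha_bpi : a * (1 - b * bd) = a := by
    rw [mul_sub, mul_one, ← mul_assoc, hab, zero_mul, sub_zero]
  have had_bpi : ad * (1 - b * bd) = ad := by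
    rw [mul_sub, mul_one, ← mul_assoc, hadb, zero_mul, sub_zero]
  have hapi_b : (1 - a * ad) * b = b := by
    rw [sub_mul, one_mul, mul_assoc, hadb, mul_zero, sub_zero]
  have hapi_bd : (1 - a * ad) * bd = bd := by
    rw [sub_mul, one_mul, mul_assoc, hadbd, mul_zero, sub_zero]
  have hq_bd : (b * bd) * bd = bd := by rw [mul_assoc]; exact hbd_split
  have hbd_q : bd * (b * bd) = bd := by rw [← mul_assoc]; exact h2i
  have had_p : ad * (a * ad) = ad := by rw [← mul_assoc]; exact h1i
  have hp_idem : (a * ad) * (a * ad) = a * ad := by rw [mul_assoc a ad, had_p]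
  have hq_idem : (b * bd) * (b * bd) = b * bd := by rw [mul_assoc b bd, hbd_q]
  have hapi_p : (1 - a * ad) * (a * ad) = 0 := by
    rw [sub_mul, one_mul, hp_idem, sub_self]
  have hbd_bpi : bd * (1 - b * bd) = 0 := by rw [mul_sub, mul_one, hbd_q, sub_self]
  have hCaad : Commute a ad := h1c
  have hCbbd : Commute b bd := h2c
  have hCa_api : Commute a (1 - a * ad) :=
    (Commute.one_right a).sub_right ((Commute.refl a).mul_right hCaad)
  have hCb_bpi : Commute b (1 - b * bd) :=
    (Commute.one_right b).sub_right ((Commute.refl b).mul_right hCbbd)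
  have hapi_idem : IsIdempotentElem (1 - a * ad) := by
    show (1 - a * ad) * (1 - a * ad) = 1 - a * ad
    rw [sub_mul, one_mul, mul_sub, mul_one, hp_idem, sub_self, sub_zero]
  have hbpi_idem : IsIdempotentElem (1 - b * bd) := by
    show (1 - b * bd) * (1 - b * bd) = 1 - b * bd
    rw [sub_mul, one_mul, mul_sub, mul_one, hq_idem, sub_self, sub_zero]
  -- nilpotency bases
  have N1 : a ^ (m₁ + 1) * (1 - a * ad) = 0 := by
    rw [← hapi_idem.pow_succ_eq m₁, ← hCa_api.mul_pow]; exact h1n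
  have N2r : b ^ (m₂ + 1) * (1 - b * bd) = 0 := by
    rw [← hbpi_idem.pow_succ_eq m₂, ← hCb_bpi.mul_pow]; exact h2n
  have N2 : (1 - b * bd) * b ^ (m₂ + 1) = 0 := by
    rw [← (hCb_bpi.pow_left (m₂ + 1)).eq]; exact N2r
  -- power helpers
  have P1 : ∀ (i : ℕ) (x : A), ad ^ (i + 1) * (b * x) = 0 := by
    intro i x; rw [pow_succ, mul_assoc, ← mul_assoc ad, hadb, zero_mul, mul_zero]
  have P2 : ∀ (i : ℕ) (x : A), ad ^ (i + 1) * (bd * x) = 0 := by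
    intro i x; rw [pow_succ, mul_assoc, ← mul_assoc ad, hadbd, zero_mul, mul_zero]
  have P3 : ∀ (i : ℕ) (x : A), a ^ (i + 1) * (b * x) = 0 := by
    intro i x; rw [pow_succ, mul_assoc, ← mul_assoc a, hab, zero_mul, mul_zero]
  have P4 : ∀ (i : ℕ) (x : A), a ^ (i + 1) * (bd * x) = 0 := by
    intro i x; rw [pow_succ, mul_assoc, ← mul_assoc a, habd, zero_mul, mul_zero]
  have P1b : ∀ i : ℕ, ad ^ (i + 1) * b = 0 := by
    intro i; rw [pow_succ, mul_assoc, hadb, mul_zero]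
  have P3b : ∀ i : ℕ, a ^ (i + 1) * b = 0 := by
    intro i; rw [pow_succ, mul_assoc, hab, mul_zero]
  have P1p : ∀ (i j : ℕ) (x : A), ad ^ (i + 1) * (b ^ (j + 1) * x) = 0 := by
    intro i j x; rw [pow_succ' b, mul_assoc, P1]
  have P2p : ∀ (i j : ℕ) (x : A), ad ^ (i + 1) * (bd ^ (j + 1) * x) = 0 := by
    intro i j x; rw [pow_succ' bd, mul_assoc, P2]
  have P3p : ∀ (i j : ℕ) (x : A), a ^ (i + 1) * (b ^ (j + 1) * x) = 0 := by
    intro i j x; rw [pow_succ' b, mul_assoc, P3]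
  have P4p : ∀ (i j : ℕ) (x : A), a ^ (i + 1) * (bd ^ (j + 1) * x) = 0 := by
    intro i j x; rw [pow_succ' bd, mul_assoc, P4]
  have P5 : ∀ i : ℕ, ad ^ (i + 1) * (a * ad) = ad ^ (i + 1) := by
    intro i
    induction i with
    | zero => simpa using had_p
    | succ n ih => rw [pow_succ' ad (n + 1), mul_assoc, ih]
  have P6 : ∀ i : ℕ, ad ^ (i + 1 + 1) * a = ad ^ (i + 1) := by
    intro i; rw [pow_succ, mul_assoc, ← h1c, P5]
  have P7 : ∀ i : ℕ, (b * bd) * bd ^ (i + 1) = bd ^ (i + 1) := by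
    intro i; rw [pow_succ' bd i, ← mul_assoc, hq_bd, ← pow_succ' bd i]
  have P8 : ∀ i : ℕ, b * bd ^ (i + 1 + 1) = bd ^ (i + 1) := by
    intro i; rw [pow_succ' bd (i + 1), ← mul_assoc, P7 i]
  -- directional sum computations
  have h_au : a * u = a * ad := by
    rw [hu, Finset.mul_sum]
    simp only [Finset.sum_range_succ', zero_add, pow_zero, mul_one, pow_one]
    have hz : ∀ i ∈ Finset.range m₂, a * ((1 - b * bd) * b ^ (i + 1) * ad ^ (i + 1 + 1)) = 0 := by
      intro i _
      rw [← mul_assoc, ← mul_assoc, ha_bpi, pow_succ' b i, ← mul_assoc, hab, zero_mul, zero_mul]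
    rw [Finset.sum_eq_zero hz, zero_add, ← mul_assoc, ha_bpi]
  have h_bu : b * u = S₂ := by
    rw [hu, hS₂, Finset.mul_sum]
    have hterm : ∀ i : ℕ, b * ((1 - b * bd) * b ^ i * ad ^ (i + 1))
        = (1 - b * bd) * b ^ (i + 1) * ad ^ (i + 1) := by
      intro i
      rw [← mul_assoc, ← mul_assoc, hCb_bpi.eq, mul_assoc (1 - b * bd) b, ← pow_succ' b]
    simp only [hterm]
    rw [Finset.sum_range_succ, N2, zero_mul, add_zero]
  have h_av : a * v = 0 := by
    rw [hv, Finset.mul_sum]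
    refine Finset.sum_eq_zero ?_
    intro i _
    rw [pow_succ' bd i, mul_assoc, mul_assoc, ← mul_assoc a, habd, zero_mul]
  have h_bv : b * v = (b * bd) * (1 - a * ad) + S₁ := by
    rw [hv, hS₁, Finset.mul_sum]
    simp only [Finset.sum_range_succ', zero_add, pow_zero, mul_one, pow_one]
    have hterm : ∀ i : ℕ, b * (bd ^ (i + 1 + 1) * a ^ (i + 1) * (1 - a * ad))
        = bd ^ (i + 1) * a ^ (i + 1) * (1 - a * ad) := by
      intro i
      rw [mul_assoc (bd ^ (i + 1 + 1)), ← mul_assoc b, P8 i, ← mul_assoc]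
    simp only [hterm]
    rw [← mul_assoc, add_comm]
  have h_ua : u * a = (1 - b * bd) * (a * ad) + S₂ := by
    rw [hu, hS₂, Finset.sum_mul]
    simp only [Finset.sum_range_succ', zero_add, pow_zero, mul_one, pow_one]
    have hterm : ∀ i : ℕ, (1 - b * bd) * b ^ (i + 1) * ad ^ (i + 1 + 1) * a
        = (1 - b * bd) * b ^ (i + 1) * ad ^ (i + 1) := by
      intro i
      rw [mul_assoc, P6 i]
    simp only [hterm]
    rw [mul_assoc, ← h1c, ← mul_assoc, add_comm]
  have h_ub : u * b = 0 := by
    rw [hu, Finset.sum_mul]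
    refine Finset.sum_eq_zero ?_
    intro i _
    rw [mul_assoc, P1b i, mul_zero]
  have h_va : v * a = S₁ := by
    rw [hv, hS₁, Finset.sum_mul]
    have hterm : ∀ i : ℕ, bd ^ (i + 1) * a ^ i * (1 - a * ad) * a
        = bd ^ (i + 1) * a ^ (i + 1) * (1 - a * ad) := by
      intro i
      rw [mul_assoc, ← hCa_api.eq, ← mul_assoc, mul_assoc (bd ^ (i + 1)), ← pow_succ]
    simp only [hterm]
    rw [Finset.sum_range_succ, mul_assoc, N1, mul_zero, add_zero]
  have h_vb : v * b = b * bd := by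
    rw [hv, Finset.sum_mul]
    simp only [Finset.sum_range_succ', zero_add, pow_zero, mul_one, pow_one]
    have hz : ∀ i ∈ Finset.range m₁, bd ^ (i + 1 + 1) * a ^ (i + 1) * (1 - a * ad) * b = 0 := by
      intro i _
      rw [mul_assoc, hapi_b, mul_assoc, P3b i, mul_zero]
    rw [Finset.sum_eq_zero hz, zero_add, mul_assoc, hapi_b, ← h2c]
  have hsX : (a + b) * (u + v) = F := by
    rw [add_mul, mul_add, mul_add, h_au, h_av, h_bu, h_bv, hF]
    abel
  have hXs : (u + v) * (a + b) = F := by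
    rw [add_mul, mul_add, mul_add, h_ua, h_ub, h_va, h_vb, hF, sub_mul, one_mul,
      mul_sub, mul_one]
    abel
  -- more helpers
  have PA : ∀ (i : ℕ) (x : A), a ^ (i + 1) * ((1 - b * bd) * x) = a ^ (i + 1) * x := by
    intro i x; rw [pow_succ, mul_assoc, ← mul_assoc a, ha_bpi, ← mul_assoc, ← pow_succ]
  have PB : ∀ (i : ℕ) (x : A), ad ^ (i + 1) * ((1 - b * bd) * x) = ad ^ (i + 1) * x := by
    intro i x; rw [pow_succ, mul_assoc, ← mul_assoc ad, had_bpi, ← mul_assoc, ← pow_succ]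
  have hpq' : ∀ x : A, (a * ad) * ((b * bd) * x) = 0 := by
    intro x
    rw [mul_assoc b bd, mul_assoc, ← mul_assoc ad, hadb, zero_mul, mul_zero]
  have hapi_q' : ∀ x : A, (1 - a * ad) * ((b * bd) * x) = (b * bd) * x := by
    intro x; rw [sub_mul, one_mul, hpq', sub_zero]
  have HB : ∀ (j : ℕ) (x : A), (1 - a * ad) * (bd ^ (j + 1) * x) = bd ^ (j + 1) * x := by
    intro j x
    rw [pow_succ' bd j, mul_assoc, ← mul_assoc, hapi_bd, ← mul_assoc, ← pow_succ' bd j]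
  have hpbpib : ∀ (j : ℕ) (x : A), (a * ad) * ((1 - b * bd) * (b ^ (j + 1) * x)) = 0 := by
    intro j x
    rw [mul_assoc, ← mul_assoc ad, had_bpi, pow_succ' b j, mul_assoc b, ← mul_assoc ad,
      hadb, zero_mul, mul_zero]
  have HC : ∀ (j : ℕ) (x : A),
      (1 - a * ad) * ((1 - b * bd) * (b ^ (j + 1) * x)) = (1 - b * bd) * (b ^ (j + 1) * x) := by
    intro j x; rw [sub_mul, one_mul, hpbpib, sub_zero]
  -- products with F
  have h_up : u * (a * ad) = u := by
    rw [hu, Finset.sum_mul]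
    refine Finset.sum_congr rfl ?_
    intro i _
    rw [mul_assoc, P5 i]
  have h_uqa : u * ((b * bd) * (1 - a * ad)) = 0 := by
    rw [hu, Finset.sum_mul]
    refine Finset.sum_eq_zero ?_
    intro i _
    rw [mul_assoc, mul_assoc b bd, P1 i, mul_zero]
  have h_uS₁ : u * S₁ = 0 := by
    rw [hu, hS₁, Finset.sum_mul]
    refine Finset.sum_eq_zero ?_
    intro i _
    rw [Finset.mul_sum]
    refine Finset.sum_eq_zero ?_
    intro j _
    rw [mul_assoc, mul_assoc (bd ^ (j + 1)), P2p i j, mul_zero]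
  have h_uS₂ : u * S₂ = 0 := by
    rw [hu, hS₂, Finset.sum_mul]
    refine Finset.sum_eq_zero ?_
    intro i _
    rw [Finset.mul_sum]
    refine Finset.sum_eq_zero ?_
    intro j _
    rw [mul_assoc, mul_assoc (1 - b * bd) (b ^ (j + 1)), PB i, P1p i j, mul_zero]
  have h_vp : v * (a * ad) = 0 := by
    rw [hv, Finset.sum_mul]
    refine Finset.sum_eq_zero ?_
    intro i _
    rw [mul_assoc, hapi_p, mul_zero]
  have h_vqa : v * ((b * bd) * (1 - a * ad)) = bd * (1 - a * ad) := by
    rw [hv, Finset.sum_mul]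
    simp only [Finset.sum_range_succ', zero_add, pow_zero, mul_one, pow_one]
    have hz : ∀ i ∈ Finset.range m₁,
        bd ^ (i + 1 + 1) * a ^ (i + 1) * (1 - a * ad) * ((b * bd) * (1 - a * ad)) = 0 := by
      intro i _
      rw [mul_assoc, hapi_q', mul_assoc, mul_assoc b bd, P3 i, mul_zero]
    rw [Finset.sum_eq_zero hz, zero_add, mul_assoc, hapi_q', ← mul_assoc, hbd_q]
  have h_vS₁ : v * S₁ = ∑ i ∈ Finset.range m₁, bd ^ (i + 1 + 1) * a ^ (i + 1) * (1 - a * ad) := by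
    rw [hv, hS₁, Finset.sum_mul]
    simp only [Finset.sum_range_succ', zero_add, pow_zero, mul_one, pow_one]
    have hz : ∀ i ∈ Finset.range m₁,
        bd ^ (i + 1 + 1) * a ^ (i + 1) * (1 - a * ad) *
          (∑ j ∈ Finset.range m₁, bd ^ (j + 1) * a ^ (j + 1) * (1 - a * ad)) = 0 := by
      intro i _
      rw [Finset.mul_sum]
      refine Finset.sum_eq_zero ?_
      intro j _
      rw [mul_assoc, mul_assoc (bd ^ (j + 1)), HB j, mul_assoc, P4p i j, mul_zero]
    rw [Finset.sum_eq_zero hz, zero_add, Finset.mul_sum]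
    refine Finset.sum_congr rfl ?_
    intro j _
    rw [mul_assoc, mul_assoc (bd ^ (j + 1)), HB j, ← mul_assoc, ← pow_succ' bd (j + 1),
      ← mul_assoc]
  have h_vS₂ : v * S₂ = 0 := by
    rw [hv, hS₂, Finset.sum_mul]
    simp only [Finset.sum_range_succ', zero_add, pow_zero, mul_one, pow_one]
    have hz : ∀ i ∈ Finset.range m₁,
        bd ^ (i + 1 + 1) * a ^ (i + 1) * (1 - a * ad) *
          (∑ j ∈ Finset.range m₂, (1 - b * bd) * b ^ (j + 1) * ad ^ (j + 1)) = 0 := by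
      intro i _
      rw [Finset.mul_sum]
      refine Finset.sum_eq_zero ?_
      intro j _
      rw [mul_assoc, mul_assoc (1 - b * bd) (b ^ (j + 1)), HC j, mul_assoc, PA i,
        P3p i j, mul_zero]
    rw [Finset.sum_eq_zero hz, zero_add, Finset.mul_sum]
    refine Finset.sum_eq_zero ?_
    intro j _
    rw [mul_assoc, mul_assoc (1 - b * bd) (b ^ (j + 1)), HC j, ← mul_assoc, hbd_bpi,
      zero_mul]
  have hXF : (u + v) * F = u + v := by
    rw [add_mul u v, hF, mul_add, mul_add, mul_add, mul_add, mul_add, mul_add,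
      h_up, h_uqa, h_uS₁, h_uS₂, h_vp, h_vqa, h_vS₁, h_vS₂]
    conv_rhs => rw [hv]
    simp only [Finset.sum_range_succ', zero_add, pow_zero, mul_one, pow_one]
    abel
  have hFidem : IsIdempotentElem F := by
    show F * F = F
    calc F * F = ((a + b) * (u + v)) * F := by rw [hsX]
      _ = (a + b) * ((u + v) * F) := mul_assoc _ _ _
      _ = (a + b) * (u + v) := by rw [hXF]
      _ = F := hsX
  have hcommF : (a + b) * F = F * (a + b) := by
    calc (a + b) * F = (a + b) * ((u + v) * (a + b)) := by rw [hXs]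
      _ = ((a + b) * (u + v)) * (a + b) := (mul_assoc _ _ _).symm
      _ = F * (a + b) := by rw [hsX]
  have hC1F : Commute (a + b) (1 - F) := (Commute.one_right (a + b)).sub_right hcommF
  have h1F : IsIdempotentElem (1 - F) := hFidem.one_sub
  -- binomial expansion
  have P3a : ∀ (i : ℕ) (x : A), a * (b ^ (i + 1) * x) = 0 := by
    intro i x
    rw [pow_succ' b i, mul_assoc b, ← mul_assoc a, hab, zero_mul]
  have hQad : ∀ (i : ℕ) (x : A), ad * (b ^ (i + 1) * x) = 0 := by
    intro i x
    rw [pow_succ' b i, mul_assoc b, ← mul_assoc ad, hadb, zero_mul]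
  have hpow : ∀ n : ℕ, (a + b) ^ n = ∑ i ∈ Finset.range (n + 1), b ^ i * a ^ (n - i) := by
    intro n
    induction n with
    | zero => simp
    | succ n ih =>
      rw [pow_succ' (a + b) n, ih, Finset.mul_sum]
      have hterm : ∀ i : ℕ, (a + b) * (b ^ i * a ^ (n - i))
          = a * (b ^ i * a ^ (n - i)) + b ^ (i + 1) * a ^ (n - i) := by
        intro i
        rw [add_mul, ← mul_assoc b, ← pow_succ' b i]
      simp only [hterm]
      rw [Finset.sum_add_distrib]
      have hz : ∑ i ∈ Finset.range (n + 1), a * (b ^ i * a ^ (n - i)) = a ^ (n + 1) := by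
        rw [Finset.sum_range_succ']
        have hz2 : ∀ i ∈ Finset.range n, a * (b ^ (i + 1) * a ^ (n - (i + 1))) = 0 :=
          fun i _ => P3a i _
        rw [Finset.sum_eq_zero hz2, zero_add, pow_zero, one_mul, Nat.sub_zero, ← pow_succ' a n]
      rw [hz, Finset.sum_range_succ' (fun i => b ^ i * a ^ (n + 1 - i)) (n + 1)]
      simp only [Nat.succ_sub_succ, pow_zero, one_mul, Nat.sub_zero]
      rw [add_comm]
  -- right kill
  have hRK : ∀ j : ℕ, a ^ (j + 1) * (1 - F) = a ^ (j + 1) * (1 - a * ad) := by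
    intro j
    have e1 : a ^ (j + 1) * ((b * bd) * (1 - a * ad)) = 0 := by
      rw [mul_assoc b bd, P3 j]
    have e2 : a ^ (j + 1) * S₁ = 0 := by
      rw [hS₁, Finset.mul_sum]
      refine Finset.sum_eq_zero ?_
      intro k _
      rw [mul_assoc (bd ^ (k + 1)), P4p j k]
    have e3 : a ^ (j + 1) * S₂ = 0 := by
      rw [hS₂, Finset.mul_sum]
      refine Finset.sum_eq_zero ?_
      intro k _
      rw [mul_assoc (1 - b * bd) (b ^ (k + 1)), PA j, P3p j k]
    rw [mul_sub, mul_sub, mul_one, hF, mul_add, mul_add, mul_add, e1, e2, e3,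
      add_zero, add_zero, add_zero]
  -- left kill
  have hLK : ∀ (i : ℕ) (x : A),
      (1 - F) * (b ^ (i + 1) * x) = (1 - b * bd) * (b ^ (i + 1) * x) := by
    intro i x
    have e0 : (a * ad) * (b ^ (i + 1) * x) = 0 := by
      rw [mul_assoc, hQad, mul_zero]
    have e1 : ((b * bd) * (1 - a * ad)) * (b ^ (i + 1) * x) = (b * bd) * (b ^ (i + 1) * x) := by
      have : (1 - a * ad) * (b ^ (i + 1) * x) = b ^ (i + 1) * x := by
        rw [sub_mul, one_mul, mul_assoc, hQad, mul_zero, sub_zero]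
      rw [mul_assoc, this]
    have e2 : S₁ * (b ^ (i + 1) * x) = 0 := by
      rw [hS₁, Finset.sum_mul]
      refine Finset.sum_eq_zero ?_
      intro k _
      have : (1 - a * ad) * (b ^ (i + 1) * x) = b ^ (i + 1) * x := by
        rw [sub_mul, one_mul, mul_assoc, hQad, mul_zero, sub_zero]
      rw [mul_assoc, this, mul_assoc, P3p k i, mul_zero]
    have e3 : S₂ * (b ^ (i + 1) * x) = 0 := by
      rw [hS₂, Finset.sum_mul]
      refine Finset.sum_eq_zero ?_
      intro k _
      rw [mul_assoc, P1p k i, mul_zero]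
    rw [sub_mul, one_mul, hF, add_mul, add_mul, add_mul, e0, e1, e2, e3, zero_add,
      add_zero, add_zero]
    rw [sub_mul, one_mul]
  -- nilpotent tails
  have hNilA : ∀ t : ℕ, a ^ (m₁ + 1 + t) * (1 - a * ad) = 0 := by
    intro t
    rw [pow_add, mul_assoc, (hCa_api.pow_left t).eq, ← mul_assoc, N1, zero_mul]
  have hNilB : ∀ (t : ℕ) (x : A), (1 - b * bd) * (b ^ (m₂ + 1 + t) * x) = 0 := by
    intro t x
    rw [pow_add, mul_assoc, ← mul_assoc, N2, zero_mul]
  refine ⟨hsX.trans hXs.symm, ?_, ⟨m₁ + 1 + m₂ + 1, ?_⟩⟩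
  · rw [mul_assoc, hsX, hXF]
  · rw [hsX, hC1F.mul_pow, h1F.pow_succ_eq]
    have hsand : (a + b) ^ (m₁ + 1 + m₂ + 1) * (1 - F)
        = (1 - F) * ((a + b) ^ (m₁ + 1 + m₂ + 1) * (1 - F)) := by
      conv_lhs => rw [← h1F.eq, ← mul_assoc, (hC1F.pow_left (m₁ + 1 + m₂ + 1)).eq,
        mul_assoc]
    rw [hsand, hpow (m₁ + 1 + m₂ + 1), Finset.sum_mul, Finset.mul_sum]
    refine Finset.sum_eq_zero ?_
    intro i _
    by_cases hic : i ≤ m₂ + 1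
    · have h1 : m₁ + 1 + m₂ + 1 - i = m₁ + (m₂ + 1 - i) + 1 := by omega
      rw [mul_assoc (b ^ i), h1, hRK]
      have h2 : m₁ + (m₂ + 1 - i) + 1 = m₁ + 1 + (m₂ + 1 - i) := by omega
      rw [h2, hNilA, mul_zero, mul_zero]
    · have h1 : i = m₂ + (i - m₂ - 1) + 1 := by omega
      rw [h1, mul_assoc (b ^ (m₂ + (i - m₂ - 1) + 1)), hLK]
      have h2 : m₂ + (i - m₂ - 1) + 1 = m₂ + 1 + (i - m₂ - 1) := by omega
      rw [h2, hNilB]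

end Key


theorem stmt_18 {A : Type*} [NormedRing A] [NormedAlgebra ℂ A] [CompleteSpace A]
    (x₁ x₂ b₁ b₂ : A) (k₁ k₂ : ℕ) (h12 : x₁ * x₂ = 0)
    (h1 : IsDrazinInverseIdx x₁ b₁ k₁) (h2 : IsDrazinInverseIdx x₂ b₂ k₂) :
    IsDrazinInverse (x₁ + x₂)
      ((∑ n ∈ Finset.Icc 1 k₂, (1 - x₂ * b₂) * x₂ ^ (n - 1) * b₁ ^ n) +
        ∑ n ∈ Finset.Icc 1 k₁, b₂ ^ n * x₁ ^ (n - 1) * (1 - x₁ * b₁)) := by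
  obtain ⟨h1c, h1i, h1n, -⟩ := h1
  obtain ⟨h2c, h2i, h2n, -⟩ := h2
  rcases k₁ with _ | m₁
  · have h0 : (1 : A) = 0 := by simpa using h1n
    have : Subsingleton A := subsingleton_of_zero_eq_one h0.symm
    exact ⟨Subsingleton.elim _ _, Subsingleton.elim _ _, ⟨0, Subsingleton.elim _ _⟩⟩
  rcases k₂ with _ | m₂
  · have h0 : (1 : A) = 0 := by simpa using h2n
    have : Subsingleton A := subsingleton_of_zero_eq_one h0.symm
    exact ⟨Subsingleton.elim _ _, Subsingleton.elim _ _, ⟨0, Subsingleton.elim _ _⟩⟩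
  have e₂ : ∑ n ∈ Finset.Icc 1 (m₂ + 1), (1 - x₂ * b₂) * x₂ ^ (n - 1) * b₁ ^ n
      = ∑ i ∈ Finset.range (m₂ + 1), (1 - x₂ * b₂) * x₂ ^ i * b₁ ^ (i + 1) := by
    rw [← Finset.Ico_add_one_right_eq_Icc, Finset.sum_Ico_eq_sum_range]
    simp [Nat.add_comm]
  have e₁ : ∑ n ∈ Finset.Icc 1 (m₁ + 1), b₂ ^ n * x₁ ^ (n - 1) * (1 - x₁ * b₁)
      = ∑ i ∈ Finset.range (m₁ + 1), b₂ ^ (i + 1) * x₁ ^ i * (1 - x₁ * b₁) := by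
    rw [← Finset.Ico_add_one_right_eq_Icc, Finset.sum_Ico_eq_sum_range]
    simp [Nat.add_comm]
  rw [e₂, e₁]
  exact drazin_add_key x₁ x₂ b₁ b₂ m₁ m₂ h12 h1c h1i h1n h2c h2i h2n
end
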